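/- arXiv:1801.02089 — 4 statements merged into one kernel-verified Lean document; each statement's English description precedes it below -/
import Mathlib

section
/- Let S ⊆ 𝕋ⁿ be a tropically convex set. Then S is a projected tropical Metzler spectrahedron if and only if its homogenization S^h ⊆ 𝕋^{1+n} is a projected tropical Metzler spectrahedron. -/
open Finset

/-- The tropical semifield `𝕋 = ℝ ∪ {-∞}`, modeled as `WithBot ℝ`
(with `⊔` as tropical addition and `+` as tropical multiplication). -/
abbrev Trop := WithBot ℝ

/-- A set `X ⊆ 𝕋ⁿ` is tropically convex if it is stable under tropical
convex combinations. -/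
def TropicallyConvex {n : ℕ} (X : Set (Fin n → Trop)) : Prop :=
  ∀ x ∈ X, ∀ y ∈ X, ∀ l m : Trop, l ⊔ m = 0 →
    (fun i => (l + x i) ⊔ (m + y i)) ∈ X

/-- The tropical convex hull of `X ⊆ 𝕋ⁿ`. -/
def tconv {n : ℕ} (X : Set (Fin n → Trop)) : Set (Fin n → Trop) :=
  ⋂₀ {Y | TropicallyConvex Y ∧ X ⊆ Y}

/-- A basic semilinear set in `ℝ^d`: finitely many strict rational-linear
inequalities and rational-linear equalities (with real right-hand sides). -/
def BasicSemilinear {d : ℕ} (S : Set (Fin d → ℝ)) : Prop :=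
  ∃ (p q : ℕ) (A : Fin p → Fin d → ℚ) (b : Fin p → ℝ)
    (C : Fin q → Fin d → ℚ) (c : Fin q → ℝ),
    S = {x | (∀ i, ∑ j, (A i j : ℝ) * x j > b i) ∧ (∀ i, ∑ j, (C i j : ℝ) * x j = c i)}

/-- A semilinear set is a finite union of basic semilinear sets. -/
def Semilinear {d : ℕ} (S : Set (Fin d → ℝ)) : Prop :=
  ∃ (N : ℕ) (f : Fin N → Set (Fin d → ℝ)),
    (∀ i, BasicSemilinear (f i)) ∧ S = ⋃ i, f i

/-- The stratum of `Y ⊆ 𝕋^d` associated with `K ⊆ [d]`, as a subset of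
`ℝ^{|K|}` (the coordinates in `K` being enumerated in increasing order). -/
def stratum {d : ℕ} (Y : Set (Fin d → Trop)) (K : Finset (Fin d)) :
    Set (Fin K.card → ℝ) :=
  {z | ∃ y ∈ Y, (∀ k, y k ≠ ⊥ ↔ k ∈ K) ∧
        ∀ j : Fin K.card, y (K.orderIsoOfFin rfl j).1 = (z j : Trop)}

/-- A symmetric tropical Metzler matrix of size `m`, encoded by the data
`(D⁺, D⁻, N)` of the moduli of the positive and negative diagonal entries
and of the (tropically negative or `-∞`) off-diagonal entries. -/
structure MetzlerData (m : ℕ) where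
  Dp : Fin m → Trop
  Dm : Fin m → Trop
  offdiag : Fin m → Fin m → Trop
  diag_sign : ∀ i, Dp i = ⊥ ∨ Dm i = ⊥
  offdiag_symm : ∀ i j, offdiag i j = offdiag j i
  offdiag_diag : ∀ i, offdiag i i = ⊥

/-- The affine tropical polynomial `c ⊔ max_k (a_k + x_k)`. -/
noncomputable def tropAff {n : ℕ} (c : Trop) (a : Fin n → Trop) (x : Fin n → Trop) : Trop :=
  c ⊔ Finset.univ.sup (fun k => a k + x k)

/-- The tropical Metzler spectrahedron `S(Q0 | Q 0, …, Q (n-1)) ⊆ 𝕋ⁿ`. -/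
def metzlerSpectrahedron {n m : ℕ} (Q0 : MetzlerData m) (Q : Fin n → MetzlerData m) :
    Set (Fin n → Trop) :=
  {x | (∀ i, tropAff (Q0.Dm i) (fun k => (Q k).Dm i) x ≤
          tropAff (Q0.Dp i) (fun k => (Q k).Dp i) x) ∧
       ∀ i j, i ≠ j →
         tropAff (Q0.offdiag i j) (fun k => (Q k).offdiag i j) x
           + tropAff (Q0.offdiag i j) (fun k => (Q k).offdiag i j) x
         ≤ tropAff (Q0.Dp i) (fun k => (Q k).Dp i) x
           + tropAff (Q0.Dp j) (fun k => (Q k).Dp j) x}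

/-- Projection of `𝕋^{n+n'}` onto the first `n` coordinates. -/
def projFirst (n n' : ℕ) (x : Fin (n + n') → Trop) : Fin n → Trop :=
  fun i => x (Fin.castAdd n' i)

/-- `S ⊆ 𝕋ⁿ` is a projected tropical Metzler spectrahedron. -/
def IsProjMetzlerSpectrahedron {n : ℕ} (S : Set (Fin n → Trop)) : Prop :=
  ∃ (n' m : ℕ), 1 ≤ m ∧ ∃ (Q0 : MetzlerData m) (Q : Fin (n + n') → MetzlerData m),
    S = projFirst n n' '' metzlerSpectrahedron Q0 Q

/-- The canonical embedding `ℝⁿ → 𝕋ⁿ`. -/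
def toTrop {n : ℕ} (x : Fin n → ℝ) : Fin n → Trop := fun i => (x i : Trop)

/-- The homogenization of `S ⊆ 𝕋ⁿ`, a subset of `𝕋^{1+n}`
(first coordinate `x₀`, remaining coordinates `x₀ + x i`). -/
def homog {n : ℕ} (S : Set (Fin n → Trop)) : Set (Fin (n + 1) → Trop) :=
  {z | ∃ (x0 : Trop) (x : Fin n → Trop), x ∈ S ∧
        z = Fin.cons x0 (fun i => x0 + x i)}

/-- A real tropical cone in `ℝⁿ`. -/
def RealTropCone {n : ℕ} (X : Set (Fin n → ℝ)) : Prop :=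
  ∀ x ∈ X, ∀ y ∈ X, ∀ l m : ℝ, (fun i => max (l + x i) (m + y i)) ∈ X

/-- A function `F : ℝⁿ → ℝ^m` is semilinear if its graph is semilinear. -/
def SemilinearFun {n m : ℕ} (F : (Fin n → ℝ) → Fin m → ℝ) : Prop :=
  Semilinear (Set.range fun x => Fin.append x (F x))

/-- `F : ℝⁿ → ℝⁿ` is additively homogeneous. -/
def AddHomog {n : ℕ} (F : (Fin n → ℝ) → Fin n → ℝ) : Prop :=
  ∀ (c : ℝ) (x : Fin n → ℝ), F (fun i => c + x i) = fun i => c + F x i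

/-- A piecewise description of `F : ℝⁿ → ℝ^m`: finitely many closed polyhedra
with nonempty interior covering `ℝⁿ`, on each of which `F` is affine. -/
def IsPiecewiseDescription {n m : ℕ} (F : (Fin n → ℝ) → Fin m → ℝ) (p : ℕ)
    (W : Fin p → Set (Fin n → ℝ)) (A : Fin p → Fin m → Fin n → ℝ)
    (b : Fin p → Fin m → ℝ) : Prop :=
  (∀ s, ∃ (q : ℕ) (C : Fin q → Fin n → ℝ) (d : Fin q → ℝ),
      W s = {x | ∀ i, d i ≤ ∑ j, C i j * x j}) ∧
  (∀ s, (interior (W s)).Nonempty) ∧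
  (⋃ s, W s) = Set.univ ∧
  ∀ s, ∀ x ∈ W s, ∀ k, F x k = (∑ j, A s k j * x j) + b s k

/-- The all-`-∞` symmetric tropical Metzler matrix. -/
def botMetzler (m : ℕ) : MetzlerData m :=
  ⟨fun _ => ⊥, fun _ => ⊥, fun _ _ => ⊥, fun _ => Or.inl rfl, fun _ _ => rfl, fun _ => rfl⟩


/-! ### Auxiliary lemmas for Statement 6 -/

section Stmt6Aux

open Finset Fin

lemma trop_add_sup (a b c : Trop) : a + (b ⊔ c) = (a + b) ⊔ (a + c) := by
  rcases le_total b c with h | h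
  · rw [sup_eq_right.2 h, sup_eq_right.2 (add_le_add_right h a)]
  · rw [sup_eq_left.2 h, sup_eq_left.2 (add_le_add_right h a)]

lemma trop_add_finsup {α : Type*} [DecidableEq α] (a : Trop) (s : Finset α) (f : α → Trop) :
    a + s.sup f = s.sup (fun i => a + f i) := by
  induction s using Finset.induction with
  | empty => simp
  | insert _ _ h ih => rw [Finset.sup_insert, Finset.sup_insert, trop_add_sup, ih]

lemma trop_sup_split (p q : ℕ) (f : Fin (p + q) → Trop) :
    univ.sup f = (univ.sup fun i => f (Fin.castAdd q i)) ⊔ (univ.sup fun j => f (Fin.natAdd p j)) := by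
  apply le_antisymm
  · refine Finset.sup_le fun k _ => ?_
    induction k using Fin.addCases with
    | left i => exact le_sup_of_le_left (Finset.le_sup (f := fun i => f (Fin.castAdd q i)) (mem_univ i))
    | right j => exact le_sup_of_le_right (Finset.le_sup (f := fun j => f (Fin.natAdd p j)) (mem_univ j))
  · exact sup_le_iff.mpr ⟨Finset.sup_le fun i _ => Finset.le_sup (mem_univ _),
      Finset.sup_le fun j _ => Finset.le_sup (mem_univ _)⟩

lemma trop_sup_succ (p : ℕ) (f : Fin (p + 1) → Trop) :
    univ.sup f = f 0 ⊔ (univ.sup fun i : Fin p => f i.succ) := by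
  apply le_antisymm
  · refine Finset.sup_le fun k _ => ?_
    induction k using Fin.cases with
    | zero => exact le_sup_left
    | succ i => exact le_sup_of_le_right (Finset.le_sup (f := fun i : Fin p => f i.succ) (mem_univ i))
  · exact sup_le_iff.mpr ⟨Finset.le_sup (f := f) (mem_univ 0), Finset.sup_le fun i _ => Finset.le_sup (f := f) (mem_univ i.succ)⟩

lemma trop_sup_single {p : ℕ} (g z : Fin p → Trop) (k0 : Fin p)
    (h0 : ∀ k, k ≠ k0 → g k = ⊥) :
    (univ.sup fun k => g k + z k) = g k0 + z k0 := by
  apply le_antisymm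
  · refine Finset.sup_le fun k _ => ?_
    by_cases hk : k = k0
    · subst hk; exact le_rfl
    · simp [h0 k hk]
  · exact Finset.le_sup (f := fun k => g k + z k) (mem_univ k0)

lemma tropAff_single {p : ℕ} (g z : Fin p → Trop) (k0 : Fin p)
    (h0 : ∀ k, k ≠ k0 → g k = ⊥) (hk0 : g k0 = 0) :
    tropAff ⊥ g z = z k0 := by
  rw [tropAff, trop_sup_single g z k0 h0, hk0, bot_sup_eq, zero_add]

lemma tropAff_const {p : ℕ} (c : Trop) (g z : Fin p → Trop) (h : ∀ k, g k = ⊥) :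
    tropAff c g z = c := by
  simp [tropAff, h]

lemma trop_cancel {a b : Trop} (x : ℝ) (h : (x : Trop) + a ≤ (x : Trop) + b) : a ≤ b :=
  (WithBot.add_le_add_iff_left (by simp)).mp h

lemma trop_half_bot {a : Trop} (h : a + a = ⊥) : a = ⊥ := by
  cases a using WithBot.recBotCoe with
  | bot => rfl
  | coe r => simp [← WithBot.coe_add] at h

lemma trop_neg_cancel (a : Trop) (x : ℝ) : (x : Trop) + (((-x : ℝ) : Trop) + a) = a := by
  cases a using WithBot.recBotCoe with
  | bot => simp
  | coe r => rw [← WithBot.coe_add, ← WithBot.coe_add]; norm_num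

lemma trop_sup_reindex {N M : ℕ} (σ : Fin N → Fin M) (hσ : Function.Surjective σ)
    (f : Fin M → Trop) : univ.sup (fun k => f (σ k)) = univ.sup f := by
  apply le_antisymm
  · exact Finset.sup_le fun k _ => Finset.le_sup (f := f) (mem_univ (σ k))
  · refine Finset.sup_le fun k' _ => ?_
    obtain ⟨k, rfl⟩ := hσ k'
    exact Finset.le_sup (f := fun k => f (σ k)) (mem_univ k)

/-- Direct sum of two Metzler data, with off-diagonal cross blocks `⊥`. -/
def extMD {m p : ℕ} (A : MetzlerData m) (B : MetzlerData p) : MetzlerData (m + p) where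
  Dp := Fin.append A.Dp B.Dp
  Dm := Fin.append A.Dm B.Dm
  offdiag := fun r s =>
    Fin.addCases (fun r' => Fin.addCases (fun s' => A.offdiag r' s') (fun _ => ⊥) s)
      (fun r' => Fin.addCases (fun _ => ⊥) (fun s' => B.offdiag r' s') s) r
  diag_sign := by
    intro i
    induction i using Fin.addCases with
    | left i => simpa using A.diag_sign i
    | right i => simpa using B.diag_sign i
  offdiag_symm := by
    intro i j
    induction i using Fin.addCases with
    | left i =>
      induction j using Fin.addCases with
      | left j => simp [A.offdiag_symm]
      | right j => simp
    | right i =>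
      induction j using Fin.addCases with
      | left j => simp
      | right j => simp [B.offdiag_symm]
  offdiag_diag := by
    intro i
    induction i using Fin.addCases with
    | left i => simp [A.offdiag_diag]
    | right i => simp [B.offdiag_diag]

@[simp] lemma extMD_Dp_left {m p : ℕ} (A : MetzlerData m) (B : MetzlerData p) (r : Fin m) :
    (extMD A B).Dp (Fin.castAdd p r) = A.Dp r := by simp [extMD]
@[simp] lemma extMD_Dp_right {m p : ℕ} (A : MetzlerData m) (B : MetzlerData p) (r : Fin p) :
    (extMD A B).Dp (Fin.natAdd m r) = B.Dp r := by simp [extMD]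
@[simp] lemma extMD_Dm_left {m p : ℕ} (A : MetzlerData m) (B : MetzlerData p) (r : Fin m) :
    (extMD A B).Dm (Fin.castAdd p r) = A.Dm r := by simp [extMD]
@[simp] lemma extMD_Dm_right {m p : ℕ} (A : MetzlerData m) (B : MetzlerData p) (r : Fin p) :
    (extMD A B).Dm (Fin.natAdd m r) = B.Dm r := by simp [extMD]
@[simp] lemma extMD_off_ll {m p : ℕ} (A : MetzlerData m) (B : MetzlerData p) (r s : Fin m) :
    (extMD A B).offdiag (Fin.castAdd p r) (Fin.castAdd p s) = A.offdiag r s := by simp [extMD]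
@[simp] lemma extMD_off_lr {m p : ℕ} (A : MetzlerData m) (B : MetzlerData p) (r : Fin m) (s : Fin p) :
    (extMD A B).offdiag (Fin.castAdd p r) (Fin.natAdd m s) = ⊥ := by simp [extMD]
@[simp] lemma extMD_off_rl {m p : ℕ} (A : MetzlerData m) (B : MetzlerData p) (r : Fin p) (s : Fin m) :
    (extMD A B).offdiag (Fin.natAdd m r) (Fin.castAdd p s) = ⊥ := by simp [extMD]
@[simp] lemma extMD_off_rr {m p : ℕ} (A : MetzlerData m) (B : MetzlerData p) (r s : Fin p) :
    (extMD A B).offdiag (Fin.natAdd m r) (Fin.natAdd m s) = B.offdiag r s := by simp [extMD]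

@[simp] lemma botMetzler_Dp (m : ℕ) (r : Fin m) : (botMetzler m).Dp r = ⊥ := rfl
@[simp] lemma botMetzler_Dm (m : ℕ) (r : Fin m) : (botMetzler m).Dm r = ⊥ := rfl
@[simp] lemma botMetzler_off (m : ℕ) (r s : Fin m) : (botMetzler m).offdiag r s = ⊥ := rfl

end Stmt6Aux


/-! ### The forward construction (homogenization) -/

section Fwd

open Finset Fin

variable {n n' m : ℕ}

/-- Block for the variable `y0`: positive diagonal `0` in row `0`. -/
def blkY0 (n : ℕ) : MetzlerData (n + 1) :=
  ⟨Fin.cons 0 (fun _ => ⊥), fun _ => ⊥, fun _ _ => ⊥,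
    fun _ => Or.inr rfl, fun _ _ => rfl, fun _ => rfl⟩

/-- Block for the variable `y i`: off-diagonal entry `0` at `(0, i.succ)`. -/
def blkYi {n : ℕ} (i : Fin n) : MetzlerData (n + 1) where
  Dp := fun _ => ⊥
  Dm := fun _ => ⊥
  offdiag := fun r s => if (r = 0 ∧ s = i.succ) ∨ (r = i.succ ∧ s = 0) then 0 else ⊥
  diag_sign := fun _ => Or.inl rfl
  offdiag_symm := by
    intro r s
    refine if_congr ⟨fun h => ?_, fun h => ?_⟩ rfl rfl <;> tauto
  offdiag_diag := by
    intro r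
    rw [if_neg]
    rintro (⟨h1, h2⟩ | ⟨h1, h2⟩) <;> exact Fin.succ_ne_zero i (by rw [← h2, h1])

/-- Block for the variable `t i`: positive diagonal `0` in row `i.succ`. -/
def blkTi {n : ℕ} (i : Fin n) : MetzlerData (n + 1) where
  Dp := fun r => if r = i.succ then 0 else ⊥
  Dm := fun _ => ⊥
  offdiag := fun _ _ => ⊥
  diag_sign := fun _ => Or.inr rfl
  offdiag_symm := fun _ _ => rfl
  offdiag_diag := fun _ => rfl

/-- The coefficient matrices of the homogenized spectrahedron. -/
def fwdQ (Q0 : MetzlerData m) (Q : Fin (n + n') → MetzlerData m) :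
    Fin ((n + 1) + (n' + n)) → MetzlerData (m + (n + 1)) :=
  Fin.addCases
    (fun i1 : Fin (n + 1) =>
      Fin.cases (extMD Q0 (blkY0 n)) (fun i => extMD (Q (Fin.castAdd n' i)) (blkYi i)) i1)
    (Fin.addCases (fun j : Fin n' => extMD (Q (Fin.natAdd n j)) (botMetzler (n + 1)))
      (fun i : Fin n => extMD (botMetzler m) (blkTi i)))

@[simp] lemma fwdQ_v0 (Q0 : MetzlerData m) (Q : Fin (n + n') → MetzlerData m) :
    fwdQ Q0 Q (Fin.castAdd (n' + n) (0 : Fin (n + 1))) = extMD Q0 (blkY0 n) := by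
  simp [fwdQ]
@[simp] lemma fwdQ_vy (Q0 : MetzlerData m) (Q : Fin (n + n') → MetzlerData m) (i : Fin n) :
    fwdQ Q0 Q (Fin.castAdd (n' + n) i.succ) = extMD (Q (Fin.castAdd n' i)) (blkYi i) := by
  simp [fwdQ]
@[simp] lemma fwdQ_vw (Q0 : MetzlerData m) (Q : Fin (n + n') → MetzlerData m) (j : Fin n') :
    fwdQ Q0 Q (Fin.natAdd (n + 1) (Fin.castAdd n j)) = extMD (Q (Fin.natAdd n j)) (botMetzler (n + 1)) := by
  simp [fwdQ]
@[simp] lemma fwdQ_vt (Q0 : MetzlerData m) (Q : Fin (n + n') → MetzlerData m) (i : Fin n) :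
    fwdQ Q0 Q (Fin.natAdd (n + 1) (Fin.natAdd n' i)) = extMD (botMetzler m) (blkTi i) := by
  simp [fwdQ]

/-- The lifted point. -/
def bigP (x0 : Trop) (x : Fin n → Trop) (u : Fin n' → Trop) (t : Fin n → Trop) :
    Fin ((n + 1) + (n' + n)) → Trop :=
  Fin.append (Fin.cons x0 (fun i => x0 + x i)) (Fin.append (fun j => x0 + u j) t)

@[simp] lemma bigP_v0 (x0 : Trop) (x : Fin n → Trop) (u : Fin n' → Trop) (t : Fin n → Trop) :
    bigP x0 x u t (Fin.castAdd (n' + n) (0 : Fin (n + 1))) = x0 := by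
  simp [bigP]
@[simp] lemma bigP_vy (x0 : Trop) (x : Fin n → Trop) (u : Fin n' → Trop) (t : Fin n → Trop) (i : Fin n) :
    bigP x0 x u t (Fin.castAdd (n' + n) i.succ) = x0 + x i := by
  simp [bigP]
@[simp] lemma bigP_vw (x0 : Trop) (x : Fin n → Trop) (u : Fin n' → Trop) (t : Fin n → Trop) (j : Fin n') :
    bigP x0 x u t (Fin.natAdd (n + 1) (Fin.castAdd n j)) = x0 + u j := by
  simp [bigP]
@[simp] lemma bigP_vt (x0 : Trop) (x : Fin n → Trop) (u : Fin n' → Trop) (t : Fin n → Trop) (i : Fin n) :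
    bigP x0 x u t (Fin.natAdd (n + 1) (Fin.natAdd n' i)) = t i := by
  simp [bigP]

lemma fwd_cases {P : Fin ((n + 1) + (n' + n)) → Prop}
    (h0 : P (Fin.castAdd (n' + n) (0 : Fin (n + 1))))
    (hy : ∀ i : Fin n, P (Fin.castAdd (n' + n) i.succ))
    (hw : ∀ j : Fin n', P (Fin.natAdd (n + 1) (Fin.castAdd n j)))
    (ht : ∀ i : Fin n, P (Fin.natAdd (n + 1) (Fin.natAdd n' i))) : ∀ k, P k := by
  intro k
  induction k using Fin.addCases with
  | left i1 =>
    induction i1 using Fin.cases with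
    | zero => exact h0
    | succ i => exact hy i
  | right j2 =>
    induction j2 using Fin.addCases with
    | left j => exact hw j
    | right i => exact ht i

lemma fwd_eval (c : Trop) (a : Fin (n + n') → Trop) (g : Fin ((n + 1) + (n' + n)) → Trop)
    (h0 : g (Fin.castAdd (n' + n) (0 : Fin (n + 1))) = c)
    (hy : ∀ i : Fin n, g (Fin.castAdd (n' + n) i.succ) = a (Fin.castAdd n' i))
    (hw : ∀ j : Fin n', g (Fin.natAdd (n + 1) (Fin.castAdd n j)) = a (Fin.natAdd n j))
    (ht : ∀ i : Fin n, g (Fin.natAdd (n + 1) (Fin.natAdd n' i)) = ⊥)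
    (x0 : Trop) (x : Fin n → Trop) (u : Fin n' → Trop) (t : Fin n → Trop) :
    tropAff ⊥ g (bigP x0 x u t) = x0 + tropAff c a (Fin.append x u) := by
  rw [tropAff, tropAff, bot_sup_eq, trop_add_sup, trop_add_finsup]
  rw [trop_sup_split (n + 1) (n' + n) (fun k => g k + bigP x0 x u t k)]
  rw [trop_sup_succ n (fun i1 => g (Fin.castAdd (n' + n) i1) + bigP x0 x u t (Fin.castAdd (n' + n) i1))]
  rw [trop_sup_split n' n (fun j2 => g (Fin.natAdd (n + 1) j2) + bigP x0 x u t (Fin.natAdd (n + 1) j2))]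
  rw [trop_sup_split n n' (fun k => x0 + (a k + Fin.append x u k))]
  simp only [bigP_v0, bigP_vy, bigP_vw, bigP_vt, h0, hy, hw, ht,
    Fin.append_left, Fin.append_right]
  have hA : (univ.sup fun i : Fin n => a (Fin.castAdd n' i) + (x0 + x i)) =
      univ.sup fun i : Fin n => x0 + (a (Fin.castAdd n' i) + x i) :=
    Finset.sup_congr rfl fun i _ => add_left_comm _ _ _
  have hB : (univ.sup fun j : Fin n' => a (Fin.natAdd n j) + (x0 + u j)) =
      univ.sup fun j : Fin n' => x0 + (a (Fin.natAdd n j) + u j) :=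
    Finset.sup_congr rfl fun j _ => add_left_comm _ _ _
  have hC : (univ.sup fun i : Fin n => (⊥ : Trop) + t i) = ⊥ := by simp
  rw [hA, hB, hC, sup_bot_eq, add_comm c x0, sup_assoc]

end Fwd


section FwdRows

open Finset Fin

variable {n n' m : ℕ} (Q0 : MetzlerData m) (Q : Fin (n + n') → MetzlerData m)

lemma fin_natAdd_inj {p q : ℕ} {a b : Fin q} (h : Fin.natAdd p a = Fin.natAdd p b) : a = b := by
  have := congrArg Fin.val h
  simp only [Fin.coe_natAdd] at this
  exact Fin.ext (by omega)

lemma fin_castAdd_inj {p q : ℕ} {a b : Fin p} (h : Fin.castAdd q a = Fin.castAdd q b) : a = b := by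
  have := congrArg Fin.val h
  simp only [Fin.coe_castAdd] at this
  exact Fin.ext this

lemma trop_two_cancel {a b c d : Trop} (x : ℝ)
    (h : ((x : Trop) + a) + ((x : Trop) + b) ≤ ((x : Trop) + c) + ((x : Trop) + d)) :
    a + b ≤ c + d := by
  apply trop_cancel (x + x)
  rw [WithBot.coe_add, add_add_add_comm (x : Trop) (x : Trop) a b,
    add_add_add_comm (x : Trop) (x : Trop) c d]
  exact h

lemma fwd_row_Dp (r : Fin m) (x0 : Trop) (x : Fin n → Trop) (u : Fin n' → Trop) (t : Fin n → Trop) :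
    tropAff ((botMetzler (m + (n + 1))).Dp (Fin.castAdd (n + 1) r))
      (fun k => (fwdQ Q0 Q k).Dp (Fin.castAdd (n + 1) r)) (bigP x0 x u t)
    = x0 + tropAff (Q0.Dp r) (fun k => (Q k).Dp r) (Fin.append x u) := by
  rw [botMetzler_Dp]
  exact fwd_eval _ _ _ (by simp) (fun i => by simp) (fun j => by simp) (fun i => by simp) x0 x u t

lemma fwd_row_Dm (r : Fin m) (x0 : Trop) (x : Fin n → Trop) (u : Fin n' → Trop) (t : Fin n → Trop) :
    tropAff ((botMetzler (m + (n + 1))).Dm (Fin.castAdd (n + 1) r))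
      (fun k => (fwdQ Q0 Q k).Dm (Fin.castAdd (n + 1) r)) (bigP x0 x u t)
    = x0 + tropAff (Q0.Dm r) (fun k => (Q k).Dm r) (Fin.append x u) := by
  rw [botMetzler_Dm]
  exact fwd_eval _ _ _ (by simp) (fun i => by simp) (fun j => by simp) (fun i => by simp) x0 x u t

lemma fwd_row_off (r s : Fin m) (x0 : Trop) (x : Fin n → Trop) (u : Fin n' → Trop) (t : Fin n → Trop) :
    tropAff ((botMetzler (m + (n + 1))).offdiag (Fin.castAdd (n + 1) r) (Fin.castAdd (n + 1) s))
      (fun k => (fwdQ Q0 Q k).offdiag (Fin.castAdd (n + 1) r) (Fin.castAdd (n + 1) s)) (bigP x0 x u t)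
    = x0 + tropAff (Q0.offdiag r s) (fun k => (Q k).offdiag r s) (Fin.append x u) := by
  rw [botMetzler_off]
  exact fwd_eval _ _ _ (by simp) (fun i => by simp) (fun j => by simp) (fun i => by simp) x0 x u t

lemma fwd_row_P0 (z : Fin ((n + 1) + (n' + n)) → Trop) :
    tropAff ((botMetzler (m + (n + 1))).Dp (Fin.natAdd m (0 : Fin (n + 1))))
      (fun k => (fwdQ Q0 Q k).Dp (Fin.natAdd m (0 : Fin (n + 1)))) z
    = z (Fin.castAdd (n' + n) (0 : Fin (n + 1))) := by
  rw [botMetzler_Dp]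
  apply tropAff_single _ _ (Fin.castAdd (n' + n) (0 : Fin (n + 1)))
  · refine fwd_cases (fun h => absurd rfl h) (fun i _ => ?_) (fun j _ => ?_) (fun i _ => ?_)
    · simp [blkYi]
    · simp
    · simp [blkTi, (Fin.succ_ne_zero i).symm]
  · simp [blkY0]

lemma fwd_row_Pt (i : Fin n) (z : Fin ((n + 1) + (n' + n)) → Trop) :
    tropAff ((botMetzler (m + (n + 1))).Dp (Fin.natAdd m i.succ))
      (fun k => (fwdQ Q0 Q k).Dp (Fin.natAdd m i.succ)) z
    = z (Fin.natAdd (n + 1) (Fin.natAdd n' i)) := by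
  rw [botMetzler_Dp]
  apply tropAff_single _ _ (Fin.natAdd (n + 1) (Fin.natAdd n' i))
  · refine fwd_cases (fun _ => ?_) (fun i' _ => ?_) (fun j _ => ?_) (fun i' hne => ?_)
    · simp [blkY0, Fin.succ_ne_zero i]
    · simp [blkYi]
    · simp
    · have hii : i' ≠ i := fun e => hne (by rw [e])
      simp only [fwdQ_vt, extMD_Dp_right, blkTi]
      rw [if_neg (fun e => hii (Fin.succ_injective _ e).symm)]
  · simp [blkTi]

lemma fwd_row_Dm_new (r1 : Fin (n + 1)) (z : Fin ((n + 1) + (n' + n)) → Trop) :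
    tropAff ((botMetzler (m + (n + 1))).Dm (Fin.natAdd m r1))
      (fun k => (fwdQ Q0 Q k).Dm (Fin.natAdd m r1)) z = ⊥ := by
  rw [botMetzler_Dm]
  apply tropAff_const
  refine fwd_cases ?_ (fun i => ?_) (fun j => ?_) (fun i => ?_) <;>
    simp [blkY0, blkYi, blkTi]

lemma fwd_row_off_0y (i : Fin n) (z : Fin ((n + 1) + (n' + n)) → Trop) :
    tropAff ((botMetzler (m + (n + 1))).offdiag (Fin.natAdd m (0 : Fin (n + 1))) (Fin.natAdd m i.succ))
      (fun k => (fwdQ Q0 Q k).offdiag (Fin.natAdd m (0 : Fin (n + 1))) (Fin.natAdd m i.succ)) z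
    = z (Fin.castAdd (n' + n) i.succ) := by
  rw [botMetzler_off]
  apply tropAff_single _ _ (Fin.castAdd (n' + n) i.succ)
  · refine fwd_cases (fun _ => ?_) (fun i' hne => ?_) (fun j _ => ?_) (fun i' _ => ?_)
    · simp [blkY0]
    · have hii : i' ≠ i := by
        intro e; subst e
        exact hne rfl
      simp only [fwdQ_vy, extMD_off_rr, blkYi]
      rw [if_neg]
      rintro (⟨-, h2⟩ | ⟨h1, -⟩)
      · exact hii (Fin.succ_injective _ h2).symm
      · exact Fin.succ_ne_zero i' (by rw [← h1])
    · simp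
    · simp [blkTi]
  · simp [blkYi]

lemma fwd_row_off_y0 (i : Fin n) (z : Fin ((n + 1) + (n' + n)) → Trop) :
    tropAff ((botMetzler (m + (n + 1))).offdiag (Fin.natAdd m i.succ) (Fin.natAdd m (0 : Fin (n + 1))))
      (fun k => (fwdQ Q0 Q k).offdiag (Fin.natAdd m i.succ) (Fin.natAdd m (0 : Fin (n + 1)))) z
    = z (Fin.castAdd (n' + n) i.succ) := by
  have h1 : ((botMetzler (m + (n + 1))).offdiag (Fin.natAdd m i.succ) (Fin.natAdd m (0 : Fin (n + 1))))
      = ((botMetzler (m + (n + 1))).offdiag (Fin.natAdd m (0 : Fin (n + 1))) (Fin.natAdd m i.succ)) :=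
    (botMetzler _).offdiag_symm _ _
  have h2 : (fun k => (fwdQ Q0 Q k).offdiag (Fin.natAdd m i.succ) (Fin.natAdd m (0 : Fin (n + 1))))
      = fun k => (fwdQ Q0 Q k).offdiag (Fin.natAdd m (0 : Fin (n + 1))) (Fin.natAdd m i.succ) := by
    funext k; exact (fwdQ Q0 Q k).offdiag_symm _ _
  rw [h1, h2, fwd_row_off_0y]

lemma fwd_row_off_lr (r : Fin m) (r1 : Fin (n + 1)) (z : Fin ((n + 1) + (n' + n)) → Trop) :
    tropAff ((botMetzler (m + (n + 1))).offdiag (Fin.castAdd (n + 1) r) (Fin.natAdd m r1))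
      (fun k => (fwdQ Q0 Q k).offdiag (Fin.castAdd (n + 1) r) (Fin.natAdd m r1)) z = ⊥ := by
  rw [botMetzler_off]
  apply tropAff_const
  refine fwd_cases ?_ (fun i => ?_) (fun j => ?_) (fun i => ?_) <;> simp

lemma fwd_row_off_rl (r : Fin m) (r1 : Fin (n + 1)) (z : Fin ((n + 1) + (n' + n)) → Trop) :
    tropAff ((botMetzler (m + (n + 1))).offdiag (Fin.natAdd m r1) (Fin.castAdd (n + 1) r))
      (fun k => (fwdQ Q0 Q k).offdiag (Fin.natAdd m r1) (Fin.castAdd (n + 1) r)) z = ⊥ := by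
  rw [botMetzler_off]
  apply tropAff_const
  refine fwd_cases ?_ (fun i => ?_) (fun j => ?_) (fun i => ?_) <;> simp

lemma fwd_row_off_ss (i j : Fin n) (z : Fin ((n + 1) + (n' + n)) → Trop) :
    tropAff ((botMetzler (m + (n + 1))).offdiag (Fin.natAdd m i.succ) (Fin.natAdd m j.succ))
      (fun k => (fwdQ Q0 Q k).offdiag (Fin.natAdd m i.succ) (Fin.natAdd m j.succ)) z = ⊥ := by
  rw [botMetzler_off]
  apply tropAff_const
  refine fwd_cases ?_ (fun i' => ?_) (fun j' => ?_) (fun i' => ?_)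
  · simp [blkY0]
  · simp only [fwdQ_vy, extMD_off_rr, blkYi]
    rw [if_neg]
    rintro (⟨h1, -⟩ | ⟨-, h2⟩)
    · exact Fin.succ_ne_zero i h1
    · exact Fin.succ_ne_zero j h2
  · simp
  · simp [blkTi]

end FwdRows


section FwdMain

open Finset Fin

theorem fwd_homog {n n' m : ℕ} (Q0 : MetzlerData m) (Q : Fin (n + n') → MetzlerData m)
    (S : Set (Fin n → Trop)) (hS : S = projFirst n n' '' metzlerSpectrahedron Q0 Q)
    (hne : S.Nonempty) :
    homog S = projFirst (n + 1) (n' + n) ''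
      metzlerSpectrahedron (botMetzler (m + (n + 1))) (fwdQ Q0 Q) := by
  ext z1
  constructor
  · rintro ⟨x0, x, hx, rfl⟩
    rw [hS] at hx
    obtain ⟨xu, hxu, hproj⟩ := hx
    set u : Fin n' → Trop := fun j => xu (Fin.natAdd n j) with hu
    have hxu' : Fin.append x u = xu := by
      funext k
      induction k using Fin.addCases with
      | left i => rw [Fin.append_left]; exact (congrFun hproj i).symm
      | right j => rw [Fin.append_right]
    set t : Fin n → Trop := fun i => x0 + (x i + x i) with ht
    refine ⟨bigP x0 x u t, ⟨?_, ?_⟩, ?_⟩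
    · intro r
      induction r using Fin.addCases with
      | left r =>
        rw [fwd_row_Dm, fwd_row_Dp, hxu']
        exact add_le_add_right (hxu.1 r) x0
      | right r1 =>
        rw [fwd_row_Dm_new]
        exact bot_le
    · intro r s hrs
      induction r using Fin.addCases with
      | left r =>
        induction s using Fin.addCases with
        | left s =>
          rw [fwd_row_off, fwd_row_Dp, fwd_row_Dp, hxu',
            add_add_add_comm x0 _ x0 _, add_add_add_comm x0 _ x0 _]
          refine add_le_add_right (hxu.2 r s fun e => hrs (by rw [e])) _
        | right s1 =>
          rw [fwd_row_off_lr]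
          simp
      | right r1 =>
        induction s using Fin.addCases with
        | left s =>
          rw [fwd_row_off_rl]
          simp
        | right s1 =>
          induction r1 using Fin.cases with
          | zero =>
            induction s1 using Fin.cases with
            | zero => exact absurd rfl hrs
            | succ j =>
              rw [fwd_row_off_0y, fwd_row_P0, fwd_row_Pt, bigP_vy, bigP_v0, bigP_vt]
              exact le_of_eq (by rw [add_add_add_comm, ht, add_assoc])
          | succ i =>
            induction s1 using Fin.cases with
            | zero =>
              rw [fwd_row_off_y0, fwd_row_Pt, fwd_row_P0, bigP_vy, bigP_v0, bigP_vt]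
              refine le_of_eq ?_
              rw [add_add_add_comm, ht]
              dsimp only
              rw [add_comm (x0 + (x i + x i)) x0, add_assoc]
            | succ j =>
              rw [fwd_row_off_ss]
              simp
    · funext i1
      induction i1 using Fin.cases with
      | zero => simp [projFirst]
      | succ i => simp [projFirst]
  · rintro ⟨z, hz, rfl⟩
    by_cases hy0 : z (Fin.castAdd (n' + n) (0 : Fin (n + 1))) = ⊥
    · obtain ⟨s0, hs0⟩ := hne
      refine ⟨⊥, s0, hs0, ?_⟩
      funext i1
      induction i1 using Fin.cases with
      | zero => simp [projFirst, hy0]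
      | succ i =>
        have hcon := hz.2 (Fin.natAdd m (0 : Fin (n + 1))) (Fin.natAdd m i.succ)
          (fun e => Fin.succ_ne_zero i (fin_natAdd_inj e).symm)
        rw [fwd_row_off_0y, fwd_row_P0, fwd_row_Pt, hy0] at hcon
        have hb : z (Fin.castAdd (n' + n) i.succ) = ⊥ := by
          refine trop_half_bot (le_bot_iff.mp ?_)
          refine hcon.trans (le_of_eq ?_)
          rw [WithBot.bot_add]
        simp [projFirst, hb]
    · obtain ⟨r0, hy0'⟩ := WithBot.ne_bot_iff_exists.mp hy0
      set x : Fin n → Trop := fun i => ((-r0 : ℝ) : Trop) + z (Fin.castAdd (n' + n) i.succ) with hx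
      set u : Fin n' → Trop := fun j => ((-r0 : ℝ) : Trop) + z (Fin.natAdd (n + 1) (Fin.castAdd n j)) with hu
      set t : Fin n → Trop := fun i => z (Fin.natAdd (n + 1) (Fin.natAdd n' i)) with ht
      have hzeq : z = bigP (r0 : Trop) x u t := by
        funext k
        refine fwd_cases (P := fun k => z k = bigP (r0 : Trop) x u t k) ?_ (fun i => ?_)
          (fun j => ?_) (fun i => ?_) k
        · show z _ = bigP (r0 : Trop) x u t _
          rw [bigP_v0, hy0']
        · show z _ = bigP (r0 : Trop) x u t _
          rw [bigP_vy, hx]; exact (trop_neg_cancel _ r0).symm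
        · show z _ = bigP (r0 : Trop) x u t _
          rw [bigP_vw, hu]; exact (trop_neg_cancel _ r0).symm
        · show z _ = bigP (r0 : Trop) x u t _
          rw [bigP_vt]
      have hmem : Fin.append x u ∈ metzlerSpectrahedron Q0 Q := by
        constructor
        · intro r
          have hc := hz.1 (Fin.castAdd (n + 1) r)
          rw [hzeq, fwd_row_Dm, fwd_row_Dp] at hc
          exact trop_cancel r0 hc
        · intro r s hrs
          have hc := hz.2 (Fin.castAdd (n + 1) r) (Fin.castAdd (n + 1) s)
            (fun e => hrs (fin_castAdd_inj e))
          rw [hzeq, fwd_row_off, fwd_row_Dp, fwd_row_Dp] at hc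
          exact trop_two_cancel r0 hc
      have hxS : x ∈ S := by
        rw [hS]
        exact ⟨Fin.append x u, hmem, by funext i; simp [projFirst, Fin.append_left]⟩
      refine ⟨(r0 : Trop), x, hxS, ?_⟩
      funext i1
      induction i1 using Fin.cases with
      | zero => simp [projFirst, hy0']
      | succ i =>
        simp only [projFirst, Fin.cons_succ]
        rw [hx]
        exact (trop_neg_cancel _ r0).symm

end FwdMain


/-! ### The backward construction (dehomogenization) -/

section Bwd

open Finset Fin

variable {n n' m : ℕ}

/-- Variable reindexing: new variables `(x, y0, u)` to old variables `(y0, x, u)`. -/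
def bwdσ (n n' : ℕ) : Fin (n + (1 + n')) → Fin ((n + 1) + n') :=
  Fin.addCases (fun i : Fin n => Fin.castAdd n' i.succ)
    (Fin.addCases (fun _ : Fin 1 => Fin.castAdd n' (0 : Fin (n + 1)))
      (fun j : Fin n' => Fin.natAdd (n + 1) j))

/-- Inverse reindexing. -/
def bwdσinv (n n' : ℕ) : Fin ((n + 1) + n') → Fin (n + (1 + n')) :=
  Fin.addCases
    (fun i1 : Fin (n + 1) =>
      Fin.cases (Fin.natAdd n (Fin.castAdd n' (0 : Fin 1)))
        (fun i => Fin.castAdd (1 + n') i) i1)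
    (fun j : Fin n' => Fin.natAdd n (Fin.natAdd 1 j))

/-- Index of the variable `y0` among the new variables. -/
def ky0 (n n' : ℕ) : Fin (n + (1 + n')) := Fin.natAdd n (Fin.castAdd n' (0 : Fin 1))

@[simp] lemma bwdσ_x (i : Fin n) : bwdσ n n' (Fin.castAdd (1 + n') i) = Fin.castAdd n' i.succ := by
  simp [bwdσ]
@[simp] lemma bwdσ_y0 (i0 : Fin 1) :
    bwdσ n n' (Fin.natAdd n (Fin.castAdd n' i0)) = Fin.castAdd n' (0 : Fin (n + 1)) := by
  simp [bwdσ]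
@[simp] lemma bwdσ_u (j : Fin n') :
    bwdσ n n' (Fin.natAdd n (Fin.natAdd 1 j)) = Fin.natAdd (n + 1) j := by
  simp [bwdσ]

@[simp] lemma bwdσinv_zero :
    bwdσinv n n' (Fin.castAdd n' (0 : Fin (n + 1))) = ky0 n n' := by
  simp [bwdσinv, ky0]
@[simp] lemma bwdσinv_succ (i : Fin n) :
    bwdσinv n n' (Fin.castAdd n' i.succ) = Fin.castAdd (1 + n') i := by
  simp [bwdσinv]
@[simp] lemma bwdσinv_u (j : Fin n') :
    bwdσinv n n' (Fin.natAdd (n + 1) j) = Fin.natAdd n (Fin.natAdd 1 j) := by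
  simp [bwdσinv]

lemma bwdσ_surj : Function.Surjective (bwdσ n n') := by
  intro k'
  induction k' using Fin.addCases with
  | left i1 =>
    induction i1 using Fin.cases with
    | zero => exact ⟨Fin.natAdd n (Fin.castAdd n' (0 : Fin 1)), by simp⟩
    | succ i => exact ⟨Fin.castAdd (1 + n') i, by simp⟩
  | right j => exact ⟨Fin.natAdd n (Fin.natAdd 1 j), by simp⟩

lemma bwd_cases {P : Fin (n + (1 + n')) → Prop}
    (hx : ∀ i : Fin n, P (Fin.castAdd (1 + n') i))
    (h0 : P (ky0 n n'))
    (hu : ∀ j : Fin n', P (Fin.natAdd n (Fin.natAdd 1 j))) : ∀ k, P k := by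
  intro k
  induction k using Fin.addCases with
  | left i => exact hx i
  | right j2 =>
    induction j2 using Fin.addCases with
    | left i0 =>
      have : i0 = 0 := Subsingleton.elim _ _
      subst this
      exact h0
    | right j => exact hu j

/-- Extra block for the variable `y0` (rows forcing `y0 = 0`). -/
def eY0 : MetzlerData 2 where
  Dp := fun r => if r = 0 then ⊥ else 0
  Dm := fun r => if r = 0 then 0 else ⊥
  offdiag := fun _ _ => ⊥
  diag_sign := by intro i; by_cases h : i = 0 <;> simp [h]
  offdiag_symm := fun _ _ => rfl
  offdiag_diag := fun _ => rfl

/-- Extra block for the constant matrix. -/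
def e0 : MetzlerData 2 where
  Dp := fun r => if r = 0 then 0 else ⊥
  Dm := fun r => if r = 0 then ⊥ else 0
  offdiag := fun _ _ => ⊥
  diag_sign := by intro i; by_cases h : i = 0 <;> simp [h]
  offdiag_symm := fun _ _ => rfl
  offdiag_diag := fun _ => rfl

def bwdExtra (n n' : ℕ) : Fin (n + (1 + n')) → MetzlerData 2 :=
  Fin.addCases (fun _ => botMetzler 2)
    (Fin.addCases (fun _ : Fin 1 => eY0) (fun _ => botMetzler 2))

@[simp] lemma bwdExtra_x (i : Fin n) : bwdExtra n n' (Fin.castAdd (1 + n') i) = botMetzler 2 := by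
  simp [bwdExtra]
@[simp] lemma bwdExtra_y0 : bwdExtra n n' (ky0 n n') = eY0 := by
  simp [bwdExtra, ky0]
@[simp] lemma bwdExtra_u (j : Fin n') : bwdExtra n n' (Fin.natAdd n (Fin.natAdd 1 j)) = botMetzler 2 := by
  simp [bwdExtra]

/-- The matrices of the dehomogenized spectrahedron. -/
def bwdQ (Q' : Fin ((n + 1) + n') → MetzlerData m) : Fin (n + (1 + n')) → MetzlerData (m + 2) :=
  fun k => extMD (Q' (bwdσ n n' k)) (bwdExtra n n' k)

variable (Q0' : MetzlerData m) (Q' : Fin ((n + 1) + n') → MetzlerData m)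

lemma bwd_row_Dm (r : Fin m) (z : Fin (n + (1 + n')) → Trop) (z' : Fin ((n + 1) + n') → Trop)
    (hcomp : ∀ k, z k = z' (bwdσ n n' k)) :
    tropAff ((extMD Q0' e0).Dm (Fin.castAdd 2 r)) (fun k => (bwdQ Q' k).Dm (Fin.castAdd 2 r)) z
      = tropAff (Q0'.Dm r) (fun k' => (Q' k').Dm r) z' := by
  rw [tropAff, tropAff, extMD_Dm_left,
    ← trop_sup_reindex (bwdσ n n') bwdσ_surj (fun k' => (Q' k').Dm r + z' k')]
  exact congrArg (Q0'.Dm r ⊔ ·) (Finset.sup_congr rfl fun k _ => by rw [hcomp k]; simp [bwdQ])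

lemma bwd_row_Dp (r : Fin m) (z : Fin (n + (1 + n')) → Trop) (z' : Fin ((n + 1) + n') → Trop)
    (hcomp : ∀ k, z k = z' (bwdσ n n' k)) :
    tropAff ((extMD Q0' e0).Dp (Fin.castAdd 2 r)) (fun k => (bwdQ Q' k).Dp (Fin.castAdd 2 r)) z
      = tropAff (Q0'.Dp r) (fun k' => (Q' k').Dp r) z' := by
  rw [tropAff, tropAff, extMD_Dp_left,
    ← trop_sup_reindex (bwdσ n n') bwdσ_surj (fun k' => (Q' k').Dp r + z' k')]
  exact congrArg (Q0'.Dp r ⊔ ·) (Finset.sup_congr rfl fun k _ => by rw [hcomp k]; simp [bwdQ])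

lemma bwd_row_off (r s : Fin m) (z : Fin (n + (1 + n')) → Trop) (z' : Fin ((n + 1) + n') → Trop)
    (hcomp : ∀ k, z k = z' (bwdσ n n' k)) :
    tropAff ((extMD Q0' e0).offdiag (Fin.castAdd 2 r) (Fin.castAdd 2 s))
      (fun k => (bwdQ Q' k).offdiag (Fin.castAdd 2 r) (Fin.castAdd 2 s)) z
      = tropAff (Q0'.offdiag r s) (fun k' => (Q' k').offdiag r s) z' := by
  rw [tropAff, tropAff, extMD_off_ll,
    ← trop_sup_reindex (bwdσ n n') bwdσ_surj (fun k' => (Q' k').offdiag r s + z' k')]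
  exact congrArg (Q0'.offdiag r s ⊔ ·) (Finset.sup_congr rfl fun k _ => by rw [hcomp k]; simp [bwdQ])

lemma bwd_row_Dm_ra (z : Fin (n + (1 + n')) → Trop) :
    tropAff ((extMD Q0' e0).Dm (Fin.natAdd m (0 : Fin 2)))
      (fun k => (bwdQ Q' k).Dm (Fin.natAdd m (0 : Fin 2))) z = z (ky0 n n') := by
  have h : (extMD Q0' e0).Dm (Fin.natAdd m (0 : Fin 2)) = ⊥ := by simp [e0]
  rw [h]
  apply tropAff_single _ _ (ky0 n n')
  · refine bwd_cases (fun i _ => ?_) (fun h => absurd rfl h) (fun j _ => ?_) <;> simp [bwdQ]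
  · simp [bwdQ, eY0]

lemma bwd_row_Dp_ra (z : Fin (n + (1 + n')) → Trop) :
    tropAff ((extMD Q0' e0).Dp (Fin.natAdd m (0 : Fin 2)))
      (fun k => (bwdQ Q' k).Dp (Fin.natAdd m (0 : Fin 2))) z = 0 := by
  refine (tropAff_const _ _ _ ?_).trans (by simp [e0])
  refine bwd_cases (fun i => ?_) ?_ (fun j => ?_) <;> simp [bwdQ, eY0]

lemma bwd_row_Dm_rb (z : Fin (n + (1 + n')) → Trop) :
    tropAff ((extMD Q0' e0).Dm (Fin.natAdd m (1 : Fin 2)))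
      (fun k => (bwdQ Q' k).Dm (Fin.natAdd m (1 : Fin 2))) z = 0 := by
  refine (tropAff_const _ _ _ ?_).trans (by simp [e0])
  refine bwd_cases (fun i => ?_) ?_ (fun j => ?_) <;> simp [bwdQ, eY0]

lemma bwd_row_Dp_rb (z : Fin (n + (1 + n')) → Trop) :
    tropAff ((extMD Q0' e0).Dp (Fin.natAdd m (1 : Fin 2)))
      (fun k => (bwdQ Q' k).Dp (Fin.natAdd m (1 : Fin 2))) z = z (ky0 n n') := by
  have h : (extMD Q0' e0).Dp (Fin.natAdd m (1 : Fin 2)) = ⊥ := by simp [e0]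
  rw [h]
  apply tropAff_single _ _ (ky0 n n')
  · refine bwd_cases (fun i _ => ?_) (fun h => absurd rfl h) (fun j _ => ?_) <;> simp [bwdQ]
  · simp [bwdQ, eY0]

lemma bwd_row_off_lr (r : Fin m) (r2 : Fin 2) (z : Fin (n + (1 + n')) → Trop) :
    tropAff ((extMD Q0' e0).offdiag (Fin.castAdd 2 r) (Fin.natAdd m r2))
      (fun k => (bwdQ Q' k).offdiag (Fin.castAdd 2 r) (Fin.natAdd m r2)) z = ⊥ := by
  refine (tropAff_const _ _ _ ?_).trans (by simp)
  refine bwd_cases (fun i => ?_) ?_ (fun j => ?_) <;> simp [bwdQ]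

lemma bwd_row_off_rl (r : Fin m) (r2 : Fin 2) (z : Fin (n + (1 + n')) → Trop) :
    tropAff ((extMD Q0' e0).offdiag (Fin.natAdd m r2) (Fin.castAdd 2 r))
      (fun k => (bwdQ Q' k).offdiag (Fin.natAdd m r2) (Fin.castAdd 2 r)) z = ⊥ := by
  refine (tropAff_const _ _ _ ?_).trans (by simp)
  refine bwd_cases (fun i => ?_) ?_ (fun j => ?_) <;> simp [bwdQ]

lemma bwd_row_off_rr (r2 s2 : Fin 2) (z : Fin (n + (1 + n')) → Trop) :
    tropAff ((extMD Q0' e0).offdiag (Fin.natAdd m r2) (Fin.natAdd m s2))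
      (fun k => (bwdQ Q' k).offdiag (Fin.natAdd m r2) (Fin.natAdd m s2)) z = ⊥ := by
  refine (tropAff_const _ _ _ ?_).trans (by simp [e0])
  refine bwd_cases (fun i => ?_) ?_ (fun j => ?_) <;> simp [bwdQ, eY0]

theorem bwd_homog (S : Set (Fin n → Trop))
    (hH : homog S = projFirst (n + 1) n' '' metzlerSpectrahedron Q0' Q') :
    S = projFirst n (1 + n') '' metzlerSpectrahedron (extMD Q0' e0) (bwdQ Q') := by
  ext x
  constructor
  · intro hx
    have hzh : Fin.cons (0 : Trop) x ∈ homog S :=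
      ⟨0, x, hx, congrArg (Fin.cons 0) (funext fun i => (zero_add (x i)).symm)⟩
    rw [hH] at hzh
    obtain ⟨z', hz', hproj⟩ := hzh
    have h0 : z' (Fin.castAdd n' (0 : Fin (n + 1))) = 0 := by
      have := congrFun hproj 0
      simpa [projFirst] using this
    refine ⟨fun k => z' (bwdσ n n' k), ⟨?_, ?_⟩, ?_⟩
    · intro r
      induction r using Fin.addCases with
      | left r =>
        rw [bwd_row_Dm Q0' Q' r _ z' (fun k => rfl), bwd_row_Dp Q0' Q' r _ z' (fun k => rfl)]
        exact hz'.1 r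
      | right r2 =>
        by_cases h2 : r2 = 0
        · subst h2
          rw [bwd_row_Dm_ra, bwd_row_Dp_ra]
          show z' (bwdσ n n' (ky0 n n')) ≤ 0
          rw [show bwdσ n n' (ky0 n n') = Fin.castAdd n' (0 : Fin (n + 1)) from bwdσ_y0 0, h0]
        · have h2' : r2 = 1 := by
            have := r2.is_lt
            refine Fin.ext ?_
            have hne : (r2 : ℕ) ≠ 0 := fun e => h2 (Fin.ext e)
            simp only [Fin.val_one]
            omega
          subst h2'
          rw [bwd_row_Dm_rb, bwd_row_Dp_rb]
          show (0 : Trop) ≤ z' (bwdσ n n' (ky0 n n'))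
          rw [show bwdσ n n' (ky0 n n') = Fin.castAdd n' (0 : Fin (n + 1)) from bwdσ_y0 0, h0]
    · intro i j hij
      induction i using Fin.addCases with
      | left r =>
        induction j using Fin.addCases with
        | left s =>
          rw [bwd_row_off Q0' Q' r s _ z' (fun k => rfl),
            bwd_row_Dp Q0' Q' r _ z' (fun k => rfl), bwd_row_Dp Q0' Q' s _ z' (fun k => rfl)]
          exact hz'.2 r s (fun e => hij (by rw [e]))
        | right s2 =>
          rw [bwd_row_off_lr]
          simp
      | right r2 =>
        induction j using Fin.addCases with
        | left s =>
          rw [bwd_row_off_rl]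
          simp
        | right s2 =>
          rw [bwd_row_off_rr]
          simp
    · funext i
      show z' (bwdσ n n' (Fin.castAdd (1 + n') i)) = x i
      rw [bwdσ_x]
      have hp := congrFun hproj i.succ
      simpa [projFirst] using hp
  · rintro ⟨z, hz, rfl⟩
    have h1 := hz.1 (Fin.natAdd m (0 : Fin 2))
    rw [bwd_row_Dm_ra, bwd_row_Dp_ra] at h1
    have h2 := hz.1 (Fin.natAdd m (1 : Fin 2))
    rw [bwd_row_Dm_rb, bwd_row_Dp_rb] at h2
    have h0 : z (ky0 n n') = 0 := le_antisymm h1 h2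
    set z' : Fin ((n + 1) + n') → Trop := fun k' => z (bwdσinv n n' k') with hz'def
    have hcomp : ∀ k, z k = z' (bwdσ n n' k) := by
      refine bwd_cases (fun i => ?_) ?_ (fun j => ?_)
      · show z _ = z (bwdσinv n n' (bwdσ n n' (Fin.castAdd (1 + n') i)))
        rw [bwdσ_x, bwdσinv_succ]
      · show z _ = z (bwdσinv n n' (bwdσ n n' (ky0 n n')))
        rw [show bwdσ n n' (ky0 n n') = Fin.castAdd n' (0 : Fin (n + 1)) from bwdσ_y0 0,
          bwdσinv_zero]
      · show z _ = z (bwdσinv n n' (bwdσ n n' (Fin.natAdd n (Fin.natAdd 1 j))))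
        rw [bwdσ_u, bwdσinv_u]
    have hz'mem : z' ∈ metzlerSpectrahedron Q0' Q' := by
      constructor
      · intro r
        have := hz.1 (Fin.castAdd 2 r)
        rw [bwd_row_Dm Q0' Q' r z z' hcomp, bwd_row_Dp Q0' Q' r z z' hcomp] at this
        exact this
      · intro i j hij
        have := hz.2 (Fin.castAdd 2 i) (Fin.castAdd 2 j) (fun e => hij (fin_castAdd_inj e))
        rw [bwd_row_off Q0' Q' i j z z' hcomp, bwd_row_Dp Q0' Q' i z z' hcomp,
          bwd_row_Dp Q0' Q' j z z' hcomp] at this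
        exact this
    have hmem : projFirst (n + 1) n' z' ∈ homog S := by
      rw [hH]
      exact ⟨z', hz'mem, rfl⟩
    obtain ⟨x0, xx, hxx, heq⟩ := hmem
    have hx0 : (0 : Trop) = x0 := by
      have := congrFun heq 0
      simpa [projFirst, hz'def, h0] using this
    have hproj : projFirst n (1 + n') z = xx := by
      funext i
      have := congrFun heq i.succ
      simp only [projFirst, Fin.cons_succ, hz'def, bwdσinv_succ, ← hx0, zero_add] at this
      exact this
    rw [hproj]
    exact hxx

end Bwd


/-- A Metzler data of size 1 defining the empty spectrahedron (constraint `0 ≤ ⊥`). -/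
def emptyQ0 : MetzlerData 1 :=
  ⟨fun _ => ⊥, fun _ => 0, fun _ _ => ⊥, fun _ => Or.inl rfl, fun _ _ => rfl, fun _ => rfl⟩

lemma empty_is_proj (N : ℕ) :
    IsProjMetzlerSpectrahedron (∅ : Set (Fin N → Trop)) := by
  refine ⟨0, 1, le_refl 1, emptyQ0, fun _ => botMetzler 1, ?_⟩
  ext z
  simp only [Set.mem_empty_iff_false, false_iff]
  rintro ⟨w, hw, -⟩
  have h := hw.1 0
  rw [tropAff_const (emptyQ0.Dm 0) (fun k => ((fun _ => botMetzler 1) k).Dm 0) w (fun k => rfl),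
    tropAff_const (emptyQ0.Dp 0) (fun k => ((fun _ => botMetzler 1) k).Dp 0) w (fun k => rfl)] at h
  exact absurd h (by simp [emptyQ0])

theorem stmt6 {n : ℕ} (S : Set (Fin n → Trop)) (hconv : TropicallyConvex S) :
    IsProjMetzlerSpectrahedron S ↔ IsProjMetzlerSpectrahedron (homog S) := by
  constructor
  · rintro ⟨n', m, hm, Q0, Q, hS⟩
    rcases S.eq_empty_or_nonempty with hE | hne
    · have hhe : homog S = (∅ : Set (Fin (n + 1) → Trop)) := by
        rw [hE]; ext z; simp [homog]
      rw [hhe]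
      exact empty_is_proj (n + 1)
    · exact ⟨n' + n, m + (n + 1), by omega, botMetzler _, fwdQ Q0 Q, fwd_homog Q0 Q S hS hne⟩
  · rintro ⟨n', m, hm, Q0', Q', hH⟩
    exact ⟨1 + n', m + 2, by omega, extMD Q0' e0, bwdQ Q', bwd_homog Q0' Q' S hH⟩
end

section
/- If S₁, S₂ ⊆ 𝕋ⁿ are projected tropical Metzler spectrahedra, then the tropical convex hull tconv(S₁ ∪ S₂) is a projected tropical Metzler spectrahedron. -/
open Finset

namespace Stmt7Aux

lemma tadd_sup (a b c : Trop) : a + (b ⊔ c) = (a + b) ⊔ (a + c) := by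
  rcases le_total b c with h|h
  · rw [sup_eq_right.2 h, sup_eq_right.2 (add_le_add_right h a)]
  · rw [sup_eq_left.2 h, sup_eq_left.2 (add_le_add_right h a)]

lemma sup_tadd (a b c : Trop) : (b ⊔ c) + a = (b + a) ⊔ (c + a) := by
  rw [add_comm, tadd_sup, add_comm b a, add_comm c a]

lemma twobot {a : Trop} (h : a + a ≤ ⊥) : a = ⊥ := by
  induction a using WithBot.recBotCoe with
  | bot => rfl
  | coe x => rw [← WithBot.coe_add, le_bot_iff] at h; exact absurd h (by simp)

lemma dbl (a b : Trop) : (a ⊔ b) + (a ⊔ b) = (a + a) ⊔ (b + b) := by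
  rcases le_total a b with h|h
  · rw [sup_eq_right.2 h, sup_eq_right.2 (add_le_add h h)]
  · rw [sup_eq_left.2 h, sup_eq_left.2 (add_le_add h h)]

lemma negcancel (r : ℝ) (a : Trop) : (r:Trop) + (((-r : ℝ):Trop) + a) = a := by
  induction a using WithBot.recBotCoe with
  | bot => simp
  | coe x => rw [← WithBot.coe_add, ← WithBot.coe_add]; norm_num

lemma supsum {α β : Type*} [Fintype α] [Fintype β] (f : α ⊕ β → Trop) :
    univ.sup f = univ.sup (fun a => f (Sum.inl a)) ⊔ univ.sup (fun b => f (Sum.inr b)) := by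
  apply le_antisymm
  · apply Finset.sup_le; rintro (i|i) _
    · exact le_sup_of_le_left (Finset.le_sup (f := fun a => f (Sum.inl a)) (Finset.mem_univ i))
    · exact le_sup_of_le_right (Finset.le_sup (f := fun b => f (Sum.inr b)) (Finset.mem_univ i))
  · apply sup_le <;> exact Finset.sup_le fun i _ => Finset.le_sup (Finset.mem_univ _)

lemma supequiv {α β : Type*} [Fintype α] [Fintype β] (e : α ≃ β) (f : β → Trop) :
    univ.sup f = univ.sup (fun a => f (e a)) := by
  apply le_antisymm
  · exact Finset.sup_le fun b _ => by
      simpa using Finset.le_sup (f := fun a => f (e a)) (Finset.mem_univ (e.symm b))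
  · exact Finset.sup_le fun a _ => Finset.le_sup (Finset.mem_univ _)

lemma addsup {ι : Type*} (c : Trop) (s : Finset ι) (f : ι → Trop) :
    c + s.sup f = s.sup fun i => c + f i := by
  induction s using Finset.cons_induction with
  | empty => simp
  | cons a s ha ih => rw [Finset.sup_cons, Finset.sup_cons, ← ih, tadd_sup]

lemma supdbl {ι : Type*} (s : Finset ι) (f : ι → Trop) :
    s.sup f + s.sup f = s.sup fun i => f i + f i := by
  induction s using Finset.cons_induction with
  | empty => simp
  | cons a s ha ih => rw [Finset.sup_cons, Finset.sup_cons, ← ih, dbl]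

lemma sup_split {ι : Type*} (s : Finset ι) (f g : ι → Trop) :
    s.sup (fun i => f i ⊔ g i) = s.sup f ⊔ s.sup g := by
  induction s using Finset.cons_induction with
  | empty => simp
  | cons a s ha ih => rw [Finset.sup_cons, Finset.sup_cons, Finset.sup_cons, ih,
      sup_sup_sup_comm]

lemma sup_bot' {ι : Type*} (s : Finset ι) : (s.sup fun _ => (⊥:Trop)) = ⊥ :=
  le_antisymm (Finset.sup_le fun _ _ => le_rfl) bot_le

lemma sup_single {ι : Type*} [Fintype ι] [DecidableEq ι] (i : ι) (g : ι → Trop) :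
    (univ.sup fun j => (if j = i then (0:Trop) else ⊥) + g j) = g i := by
  apply le_antisymm
  · exact Finset.sup_le fun j _ => by by_cases h : j = i <;> simp [h]
  · simpa using Finset.le_sup (f := fun j => (if j = i then (0:Trop) else ⊥) + g j)
      (Finset.mem_univ i)

lemma sup_fin4 (f : Fin 4 → Trop) :
    univ.sup f = f 0 ⊔ (f 1 ⊔ (f 2 ⊔ f 3)) := by
  apply le_antisymm
  · apply Finset.sup_le; intro i _; fin_cases i
    · exact le_sup_left
    · exact le_sup_of_le_right le_sup_left
    · exact le_sup_of_le_right (le_sup_of_le_right le_sup_left)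
    · exact le_sup_of_le_right (le_sup_of_le_right le_sup_right)
  · apply sup_le (Finset.le_sup (Finset.mem_univ _))
    apply sup_le (Finset.le_sup (Finset.mem_univ _))
    exact sup_le (Finset.le_sup (Finset.mem_univ _)) (Finset.le_sup (Finset.mem_univ _))

lemma tropAff_combo {n : ℕ} (c : Trop) (a x y : Fin n → Trop) {l m : Trop} (h : l ⊔ m = 0) :
    tropAff c a (fun i => (l + x i) ⊔ (m + y i)) =
      (l + tropAff c a x) ⊔ (m + tropAff c a y) := by
  unfold tropAff
  have key : ∀ k ∈ (univ : Finset (Fin n)), a k + ((l + x k) ⊔ (m + y k)) =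
      (l + (a k + x k)) ⊔ (m + (a k + y k)) := fun k _ => by
    rw [tadd_sup, add_left_comm (a k) l, add_left_comm (a k) m]
  rw [Finset.sup_congr rfl key, sup_split, tadd_sup, tadd_sup, sup_sup_sup_comm,
    ← addsup, ← addsup, ← sup_tadd, h, zero_add]

lemma spec_convex {n m : ℕ} (Q0 : MetzlerData m) (Q : Fin n → MetzlerData m) :
    TropicallyConvex (metzlerSpectrahedron Q0 Q) := by
  intro x hx y hy l mm hlm
  obtain ⟨h1x, h2x⟩ := hx
  obtain ⟨h1y, h2y⟩ := hy
  constructor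
  · intro i
    rw [tropAff_combo _ _ _ _ hlm, tropAff_combo _ _ _ _ hlm]
    exact sup_le_sup (add_le_add_right (h1x i) l) (add_le_add_right (h1y i) mm)
  · intro i j hij
    rw [tropAff_combo _ _ _ _ hlm, tropAff_combo _ _ _ _ hlm, tropAff_combo _ _ _ _ hlm,
      dbl]
    apply sup_le
    · calc (l + tropAff (Q0.offdiag i j) (fun k => (Q k).offdiag i j) x)
            + (l + tropAff (Q0.offdiag i j) (fun k => (Q k).offdiag i j) x)
          = (l + l) + (tropAff (Q0.offdiag i j) (fun k => (Q k).offdiag i j) x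
            + tropAff (Q0.offdiag i j) (fun k => (Q k).offdiag i j) x) := by
            rw [add_add_add_comm]
        _ ≤ (l + l) + (tropAff (Q0.Dp i) (fun k => (Q k).Dp i) x
            + tropAff (Q0.Dp j) (fun k => (Q k).Dp j) x) := add_le_add_right (h2x i j hij) _
        _ = (l + tropAff (Q0.Dp i) (fun k => (Q k).Dp i) x)
            + (l + tropAff (Q0.Dp j) (fun k => (Q k).Dp j) x) := by rw [add_add_add_comm]
        _ ≤ _ := add_le_add le_sup_left le_sup_left
    · calc (mm + tropAff (Q0.offdiag i j) (fun k => (Q k).offdiag i j) y)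
            + (mm + tropAff (Q0.offdiag i j) (fun k => (Q k).offdiag i j) y)
          = (mm + mm) + (tropAff (Q0.offdiag i j) (fun k => (Q k).offdiag i j) y
            + tropAff (Q0.offdiag i j) (fun k => (Q k).offdiag i j) y) := by
            rw [add_add_add_comm]
        _ ≤ (mm + mm) + (tropAff (Q0.Dp i) (fun k => (Q k).Dp i) y
            + tropAff (Q0.Dp j) (fun k => (Q k).Dp j) y) := add_le_add_right (h2y i j hij) _
        _ = (mm + tropAff (Q0.Dp i) (fun k => (Q k).Dp i) y)
            + (mm + tropAff (Q0.Dp j) (fun k => (Q k).Dp j) y) := by rw [add_add_add_comm]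
        _ ≤ _ := add_le_add le_sup_right le_sup_right

lemma subset_tconv {n : ℕ} (S : Set (Fin n → Trop)) : S ⊆ tconv S :=
  fun x hx => Set.mem_sInter.2 fun _ hY => hY.2 hx

lemma tconv_convex {n : ℕ} (S : Set (Fin n → Trop)) : TropicallyConvex (tconv S) := by
  intro x hx y hy l m h
  exact Set.mem_sInter.2 fun Y hY =>
    hY.1 x (Set.mem_sInter.1 hx Y hY) y (Set.mem_sInter.1 hy Y hY) l m h

lemma tconv_min {n : ℕ} {S Y : Set (Fin n → Trop)} (h : TropicallyConvex Y) (hS : S ⊆ Y) :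
    tconv S ⊆ Y := fun _ hx => Set.mem_sInter.1 hx Y ⟨h, hS⟩

lemma tconv_eq {n : ℕ} {S : Set (Fin n → Trop)} (h : TropicallyConvex S) : tconv S = S :=
  Set.Subset.antisymm (tconv_min h subset_rfl) (subset_tconv S)

lemma proj_convex {n n' : ℕ} {S : Set (Fin (n + n') → Trop)} (h : TropicallyConvex S) :
    TropicallyConvex (projFirst n n' '' S) := by
  rintro _ ⟨wx, hwx, rfl⟩ _ ⟨wy, hwy, rfl⟩ l m hlm
  exact ⟨_, h wx hwx wy hwy l m hlm, rfl⟩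

def Combo {n : ℕ} (S1 S2 : Set (Fin n → Trop)) : Set (Fin n → Trop) :=
  {z | ∃ x ∈ S1, ∃ y ∈ S2, ∃ l m : Trop, l ⊔ m = 0 ∧ z = fun i => (l + x i) ⊔ (m + y i)}

lemma combo_convex {n : ℕ} {S1 S2 : Set (Fin n → Trop)}
    (h1 : TropicallyConvex S1) (h2 : TropicallyConvex S2) :
    TropicallyConvex (Combo S1 S2) := by
  rintro z1 ⟨x1, hx1, y1, hy1, l1, m1, hlm1, rfl⟩ z2 ⟨x2, hx2, y2, hy2, l2, m2, hlm2, rfl⟩ a b hab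
  have expand : ∀ i : Fin n, (a + ((l1 + x1 i) ⊔ (m1 + y1 i))) ⊔ (b + ((l2 + x2 i) ⊔ (m2 + y2 i)))
      = ((((a+l1)+x1 i) ⊔ ((b+l2)+x2 i)) ⊔ (((a+m1)+y1 i) ⊔ ((b+m2)+y2 i))) := by
    intro i
    rw [tadd_sup, tadd_sup, sup_sup_sup_comm, add_assoc, add_assoc, add_assoc, add_assoc]
  have hLM : ((a+l1) ⊔ (b+l2)) ⊔ ((a+m1) ⊔ (b+m2)) = 0 := by
    rw [sup_sup_sup_comm, ← tadd_sup, ← tadd_sup, hlm1, hlm2, add_zero, add_zero, hab]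
  rcases eq_or_ne ((a+l1) ⊔ (b+l2)) ⊥ with hLbot | hLne
  · obtain ⟨h1b, h2b⟩ := sup_eq_bot_iff.1 hLbot
    have hM0 : (a+m1) ⊔ (b+m2) = 0 := by rw [← hLM, hLbot, bot_sup_eq]
    refine ⟨x1, hx1, _, h2 y1 hy1 y2 hy2 _ _ hM0, ⊥, 0, by simp, funext fun i => ?_⟩
    rw [expand i, h1b, h2b]
    simp
  · rcases eq_or_ne ((a+m1) ⊔ (b+m2)) ⊥ with hMbot | hMne
    · obtain ⟨h1b, h2b⟩ := sup_eq_bot_iff.1 hMbot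
      have hL0 : (a+l1) ⊔ (b+l2) = 0 := by rw [← hLM, hMbot, sup_bot_eq]
      refine ⟨_, h1 x1 hx1 x2 hx2 _ _ hL0, y1, hy1, 0, ⊥, by simp, funext fun i => ?_⟩
      rw [expand i, h1b, h2b]
      simp
    · obtain ⟨r, hr⟩ := WithBot.ne_bot_iff_exists.1 hLne
      obtain ⟨s, hs⟩ := WithBot.ne_bot_iff_exists.1 hMne
      have hx' : (fun i => ((((-r:ℝ):Trop)+(a+l1))+x1 i) ⊔ ((((-r:ℝ):Trop)+(b+l2))+x2 i)) ∈ S1 := by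
        apply h1 x1 hx1 x2 hx2
        rw [← tadd_sup, ← hr, ← WithBot.coe_add]
        norm_num
      have hy' : (fun i => ((((-s:ℝ):Trop)+(a+m1))+y1 i) ⊔ ((((-s:ℝ):Trop)+(b+m2))+y2 i)) ∈ S2 := by
        apply h2 y1 hy1 y2 hy2
        rw [← tadd_sup, ← hs, ← WithBot.coe_add]
        norm_num
      refine ⟨_, hx', _, hy', (a+l1) ⊔ (b+l2), (a+m1) ⊔ (b+m2), hLM, funext fun i => ?_⟩
      have cancel2 : ∀ (t : ℝ) (c d : Trop), (t:Trop) + (((-t:ℝ):Trop) + c + d) = c + d :=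
        fun t c d => by rw [add_assoc ((-t:ℝ):Trop) c d, negcancel]
      rw [expand i]
      congr 1
      · rw [show (((a+l1)+x1 i) ⊔ ((b+l2)+x2 i)) =
            (r:Trop) + (((((-r:ℝ):Trop)+(a+l1))+x1 i) ⊔ ((((-r:ℝ):Trop)+(b+l2))+x2 i)) from by
          rw [tadd_sup, cancel2, cancel2], hr]
      · rw [show (((a+m1)+y1 i) ⊔ ((b+m2)+y2 i)) =
            (s:Trop) + (((((-s:ℝ):Trop)+(a+m1))+y1 i) ⊔ ((((-s:ℝ):Trop)+(b+m2))+y2 i)) from by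
          rw [tadd_sup, cancel2, cancel2], hs]

end Stmt7Aux
namespace Stmt7Aux

lemma tconv_union_eq {n : ℕ} {S1 S2 : Set (Fin n → Trop)}
    (h1 : TropicallyConvex S1) (h2 : TropicallyConvex S2)
    {x0 y0 : Fin n → Trop} (hx0 : x0 ∈ S1) (hy0 : y0 ∈ S2) :
    tconv (S1 ∪ S2) = Combo S1 S2 := by
  apply Set.Subset.antisymm
  · apply tconv_min (combo_convex h1 h2)
    rintro z (hz|hz)
    · exact ⟨z, hz, y0, hy0, 0, ⊥, by simp, funext fun i => by simp⟩
    · exact ⟨x0, hx0, z, hz, ⊥, 0, by simp, funext fun i => by simp⟩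
  · rintro z ⟨x, hx, y, hy, l, m, hlm, rfl⟩
    exact tconv_convex _ x (subset_tconv _ (Set.mem_union_left _ hx))
      y (subset_tconv _ (Set.mem_union_right _ hy)) l m hlm

/-! ### Homogenized systems -/

def HomogSys {N m : ℕ} (Q0 : MetzlerData m) (Q : Fin N → MetzlerData m)
    (t : Trop) (x : Fin N → Trop) : Prop :=
  (∀ i, univ.sup (fun k => (Q k).Dm i + x k) ⊔ (Q0.Dm i + t)
      ≤ univ.sup (fun k => (Q k).Dp i + x k) ⊔ (Q0.Dp i + t)) ∧
  (∀ i j, i ≠ j →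
    (univ.sup (fun k => (Q k).offdiag i j + x k) ⊔ (Q0.offdiag i j + t))
    + (univ.sup (fun k => (Q k).offdiag i j + x k) ⊔ (Q0.offdiag i j + t))
    ≤ (univ.sup (fun k => (Q k).Dp i + x k) ⊔ (Q0.Dp i + t))
      + (univ.sup (fun k => (Q k).Dp j + x k) ⊔ (Q0.Dp j + t)))

lemma homog_zero {N m : ℕ} (Q0 : MetzlerData m) (Q : Fin N → MetzlerData m)
    (x : Fin N → Trop) :
    HomogSys Q0 Q 0 x ↔ x ∈ metzlerSpectrahedron Q0 Q := by
  unfold HomogSys metzlerSpectrahedron tropAff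
  simp only [add_zero, Set.mem_setOf_eq, sup_comm]

lemma shiftEval {N : ℕ} (c d t : Trop) (a x : Fin N → Trop) :
    univ.sup (fun k => a k + (c + x k)) ⊔ (d + (c + t)) =
      c + (univ.sup (fun k => a k + x k) ⊔ (d + t)) := by
  rw [tadd_sup, addsup]
  congr 1
  · exact Finset.sup_congr rfl fun k _ => by rw [add_left_comm]
  · rw [add_left_comm]

lemma homog_shift {N m : ℕ} {Q0 : MetzlerData m} {Q : Fin N → MetzlerData m}
    {t : Trop} {x : Fin N → Trop} (c : Trop) (h : HomogSys Q0 Q t x) :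
    HomogSys Q0 Q (c + t) (fun k => c + x k) := by
  obtain ⟨hA, hB⟩ := h
  constructor
  · intro i
    rw [shiftEval, shiftEval]
    exact add_le_add_right (hA i) c
  · intro i j hij
    rw [shiftEval, shiftEval, shiftEval]
    calc (c + _) + (c + _) = (c + c) + (_ + _) := by rw [add_add_add_comm]
      _ ≤ (c + c) + _ := add_le_add_right (hB i j hij) _
      _ = _ := by rw [add_add_add_comm]

lemma homog_bot {N m : ℕ} (Q0 : MetzlerData m) (Q : Fin N → MetzlerData m) :
    HomogSys Q0 Q ⊥ (fun _ => ⊥) := by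
  constructor
  · intro i
    simp [WithBot.add_bot, sup_bot']
  · intro i j _
    simp [WithBot.add_bot, sup_bot']

lemma homog_real {N m : ℕ} {Q0 : MetzlerData m} {Q : Fin N → MetzlerData m}
    {r : ℝ} {x : Fin N → Trop} (h : HomogSys Q0 Q (r:Trop) x) :
    (fun k => ((-r:ℝ):Trop) + x k) ∈ metzlerSpectrahedron Q0 Q := by
  rw [← homog_zero]
  have h2 := homog_shift (((-r:ℝ)):Trop) h
  rwa [show ((-r:ℝ):Trop) + (r:Trop) = 0 from by rw [← WithBot.coe_add]; norm_num] at h2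

/-! ### Index types for the big spectrahedron -/

abbrev XI := Unit ⊕ (Unit ⊕ (Unit ⊕ (Unit ⊕ (Unit ⊕ (Unit ⊕ Unit)))))

abbrev RI (m1 m2 n : ℕ) := Fin m1 ⊕ (Fin m2 ⊕ (Fin n ⊕ (Fin n ⊕ (Fin n ⊕ XI))))

abbrev VI (n n1 n2 : ℕ) :=
  Fin n ⊕ (Fin (n+n1) ⊕ (Fin (n+n2) ⊕ (Unit ⊕ (Unit ⊕ (Unit ⊕ Unit)))))

abbrev nAux (n n1 n2 : ℕ) : ℕ := (n+n1) + ((n+n2) + (1 + (1 + (1 + 1))))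

section Idx
variable {n n1 n2 m1 m2 : ℕ}

@[match_pattern] def Zv (i : Fin n) : VI n n1 n2 := Sum.inl i
@[match_pattern] def Uv (j : Fin (n+n1)) : VI n n1 n2 := Sum.inr (Sum.inl j)
@[match_pattern] def Vv (j : Fin (n+n2)) : VI n n1 n2 := Sum.inr (Sum.inr (Sum.inl j))
@[match_pattern] def Lv : VI n n1 n2 := Sum.inr (Sum.inr (Sum.inr (Sum.inl ())))
@[match_pattern] def Mv : VI n n1 n2 := Sum.inr (Sum.inr (Sum.inr (Sum.inr (Sum.inl ()))))
@[match_pattern] def Sav : VI n n1 n2 :=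
  Sum.inr (Sum.inr (Sum.inr (Sum.inr (Sum.inr (Sum.inl ())))))
@[match_pattern] def Sbv : VI n n1 n2 :=
  Sum.inr (Sum.inr (Sum.inr (Sum.inr (Sum.inr (Sum.inr ())))))

@[match_pattern] def R1 (i : Fin m1) : RI m1 m2 n := Sum.inl i
@[match_pattern] def R2 (i : Fin m2) : RI m1 m2 n := Sum.inr (Sum.inl i)
@[match_pattern] def R3 (i : Fin n) : RI m1 m2 n := Sum.inr (Sum.inr (Sum.inl i))
@[match_pattern] def R4 (i : Fin n) : RI m1 m2 n := Sum.inr (Sum.inr (Sum.inr (Sum.inl i)))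
@[match_pattern] def R5 (i : Fin n) : RI m1 m2 n :=
  Sum.inr (Sum.inr (Sum.inr (Sum.inr (Sum.inl i))))
@[match_pattern] def X0 : RI m1 m2 n :=
  Sum.inr (Sum.inr (Sum.inr (Sum.inr (Sum.inr (Sum.inl ())))))
@[match_pattern] def X1 : RI m1 m2 n :=
  Sum.inr (Sum.inr (Sum.inr (Sum.inr (Sum.inr (Sum.inr (Sum.inl ()))))))
@[match_pattern] def X2 : RI m1 m2 n :=
  Sum.inr (Sum.inr (Sum.inr (Sum.inr (Sum.inr (Sum.inr (Sum.inr (Sum.inl ())))))))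
@[match_pattern] def X3 : RI m1 m2 n :=
  Sum.inr (Sum.inr (Sum.inr (Sum.inr (Sum.inr (Sum.inr (Sum.inr (Sum.inr (Sum.inl ()))))))))
@[match_pattern] def X4 : RI m1 m2 n :=
  Sum.inr (Sum.inr (Sum.inr (Sum.inr (Sum.inr (Sum.inr (Sum.inr (Sum.inr (Sum.inr (Sum.inl ())))))))))
@[match_pattern] def X5 : RI m1 m2 n :=
  Sum.inr (Sum.inr (Sum.inr (Sum.inr (Sum.inr (Sum.inr (Sum.inr (Sum.inr (Sum.inr (Sum.inr (Sum.inl ()))))))))))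
@[match_pattern] def X6 : RI m1 m2 n :=
  Sum.inr (Sum.inr (Sum.inr (Sum.inr (Sum.inr (Sum.inr (Sum.inr (Sum.inr (Sum.inr (Sum.inr (Sum.inr ()))))))))))

def eU : Unit ≃ Fin 1 := Equiv.ofUnique _ _

def eVar (n n1 n2 : ℕ) : VI n n1 n2 ≃ Fin (n + nAux n n1 n2) :=
  (Equiv.sumCongr (Equiv.refl (Fin n))
    ((Equiv.sumCongr (Equiv.refl (Fin (n+n1)))
      ((Equiv.sumCongr (Equiv.refl (Fin (n+n2)))
        ((Equiv.sumCongr eU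
          ((Equiv.sumCongr eU
            ((Equiv.sumCongr eU eU).trans finSumFinEquiv)).trans finSumFinEquiv)).trans
          finSumFinEquiv)).trans finSumFinEquiv)).trans finSumFinEquiv)).trans finSumFinEquiv

lemma eVar_inl (i : Fin n) :
    eVar n n1 n2 (Zv i) = Fin.castAdd (nAux n n1 n2) i := by
  simp [eVar, Zv, finSumFinEquiv_apply_left]

lemma sup_unit (f : Unit → Trop) : univ.sup f = f () := by
  rw [Finset.univ_unique, Finset.sup_singleton]

lemma supVI (f : VI n n1 n2 → Trop) :
    univ.sup f = (univ.sup fun i : Fin n => f (Zv i)) ⊔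
      ((univ.sup fun j : Fin (n+n1) => f (Uv j)) ⊔
      ((univ.sup fun j : Fin (n+n2) => f (Vv j)) ⊔
      (f Lv ⊔ (f Mv ⊔ (f Sav ⊔ f Sbv))))) := by
  simp only [supsum, sup_unit]
  rfl

end Idx
end Stmt7Aux
namespace Stmt7Aux
section Data
variable {n n1 n2 m1 m2 : ℕ}
variable (Q10 : MetzlerData m1) (Q1 : Fin (n+n1) → MetzlerData m1)
variable (Q20 : MetzlerData m2) (Q2 : Fin (n+n2) → MetzlerData m2)

/-- positive diagonal coefficients of the big system -/
noncomputable def dpF : VI n n1 n2 → RI m1 m2 n → Trop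
  | Zv a, R4 b => if a = b then 0 else ⊥
  | Zv a, R5 b => if a = b then 0 else ⊥
  | Uv j, R1 i => (Q1 j).Dp i
  | Uv j, R3 i => if j = Fin.castAdd n1 i then 0 else ⊥
  | Vv j, R2 i => (Q2 j).Dp i
  | Vv j, R3 i => if j = Fin.castAdd n2 i then 0 else ⊥
  | Lv, R1 i => Q10.Dp i
  | Lv, X2 => 0
  | Lv, X3 => 0
  | Mv, R2 i => Q20.Dp i
  | Mv, X2 => 0
  | Mv, X5 => 0
  | Sav, X4 => 0
  | Sbv, X6 => 0
  | _, _ => ⊥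

/-- negative diagonal coefficients of the big system -/
noncomputable def dmF : VI n n1 n2 → RI m1 m2 n → Trop
  | Zv a, R3 b => if a = b then 0 else ⊥
  | Uv j, R1 i => (Q1 j).Dm i
  | Lv, R1 i => Q10.Dm i
  | Uv j, R4 i => if j = Fin.castAdd n1 i then 0 else ⊥
  | Vv j, R2 i => (Q2 j).Dm i
  | Mv, R2 i => Q20.Dm i
  | Vv j, R5 i => if j = Fin.castAdd n2 i then 0 else ⊥
  | Lv, X0 => 0
  | Mv, X1 => 0
  | _, _ => ⊥

/-- one-sided off-diagonal coefficients of the big system -/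
noncomputable def ndF : VI n n1 n2 → RI m1 m2 n → RI m1 m2 n → Trop
  | Uv j, R1 i, R1 i' => (Q1 j).offdiag i i'
  | Uv _, X3, X4 => 0
  | Vv j, R2 i, R2 i' => (Q2 j).offdiag i i'
  | Vv _, X5, X6 => 0
  | Lv, R1 i, R1 i' => Q10.offdiag i i'
  | Mv, R2 i, R2 i' => Q20.offdiag i i'
  | _, _, _ => ⊥

/-- symmetrized off-diagonal coefficients -/
noncomputable def ndS (v : VI n n1 n2) (r r' : RI m1 m2 n) : Trop :=
  ndF Q10 Q1 Q20 Q2 v r r' ⊔ ndF Q10 Q1 Q20 Q2 v r' r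

noncomputable def dp0 : RI m1 m2 n → Trop
  | X0 => 0
  | X1 => 0
  | _ => ⊥

noncomputable def dm0 : RI m1 m2 n → Trop
  | X2 => 0
  | _ => ⊥

noncomputable def eRow (m1 m2 n : ℕ) : RI m1 m2 n ≃ Fin (Fintype.card (RI m1 m2 n)) :=
  Fintype.equivFin _

abbrev MBig (m1 m2 n : ℕ) : ℕ := Fintype.card (RI m1 m2 n)

lemma MBig_pos : 1 ≤ MBig m1 m2 n :=
  Fintype.card_pos_iff.2 ⟨X6⟩

lemma ndF_diag (v : VI n n1 n2) (r : RI m1 m2 n) : ndF Q10 Q1 Q20 Q2 v r r = ⊥ := by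
  rcases v with i | j | j | ⟨⟩ | ⟨⟩ | ⟨⟩ | ⟨⟩ <;>
    rcases r with i' | i' | i' | i' | i' | ⟨⟩|⟨⟩|⟨⟩|⟨⟩|⟨⟩|⟨⟩|⟨⟩ <;>
    first
      | rfl
      | exact (Q1 _).offdiag_diag _
      | exact (Q2 _).offdiag_diag _
      | exact Q10.offdiag_diag _
      | exact Q20.offdiag_diag _

lemma dp_dm_sign (v : VI n n1 n2) (r : RI m1 m2 n) :
    dpF Q10 Q1 Q20 Q2 v r = ⊥ ∨ dmF Q10 Q1 Q20 Q2 v r = ⊥ := by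
  rcases v with i | j | j | ⟨⟩ | ⟨⟩ | ⟨⟩ | ⟨⟩ <;>
    rcases r with i' | i' | i' | i' | i' | ⟨⟩|⟨⟩|⟨⟩|⟨⟩|⟨⟩|⟨⟩|⟨⟩ <;>
    first
      | exact Or.inr rfl
      | exact Or.inl rfl
      | exact (Q1 _).diag_sign _
      | exact (Q2 _).diag_sign _
      | exact Q10.diag_sign _
      | exact Q20.diag_sign _

lemma dp0_dm0_sign (r : RI m1 m2 n) : dp0 r = ⊥ ∨ (dm0 r : Trop) = ⊥ := by
  rcases r with i' | i' | i' | i' | i' | ⟨⟩|⟨⟩|⟨⟩|⟨⟩|⟨⟩|⟨⟩|⟨⟩ <;>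
    first | exact Or.inr rfl | exact Or.inl rfl

/-- the big Metzler matrix attached to a variable -/
noncomputable def bigQ (v : VI n n1 n2) : MetzlerData (MBig m1 m2 n) where
  Dp := fun i => dpF Q10 Q1 Q20 Q2 v ((eRow m1 m2 n).symm i)
  Dm := fun i => dmF Q10 Q1 Q20 Q2 v ((eRow m1 m2 n).symm i)
  offdiag := fun i i' => ndS Q10 Q1 Q20 Q2 v ((eRow m1 m2 n).symm i) ((eRow m1 m2 n).symm i')
  diag_sign := fun i => dp_dm_sign Q10 Q1 Q20 Q2 v _
  offdiag_symm := fun i j => sup_comm _ _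
  offdiag_diag := fun i => by
    simp [ndS, ndF_diag]

/-- the big constant Metzler matrix -/
noncomputable def bigQ0 : MetzlerData (MBig m1 m2 n) where
  Dp := fun i => dp0 ((eRow m1 m2 n).symm i)
  Dm := fun i => dm0 ((eRow m1 m2 n).symm i)
  offdiag := fun _ _ => ⊥
  diag_sign := fun i => dp0_dm0_sign _
  offdiag_symm := fun _ _ => rfl
  offdiag_diag := fun _ => rfl

end Data
end Stmt7Aux
namespace Stmt7Aux
section Char
variable {n n1 n2 m1 m2 : ℕ}
variable (Q10 : MetzlerData m1) (Q1 : Fin (n+n1) → MetzlerData m1)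
variable (Q20 : MetzlerData m2) (Q2 : Fin (n+n2) → MetzlerData m2)

noncomputable def QbigFam : Fin (n + nAux n n1 n2) → MetzlerData (MBig m1 m2 n) :=
  fun k => bigQ Q10 Q1 Q20 Q2 ((eVar n n1 n2).symm k)

def BigCond (W : VI n n1 n2 → Trop) : Prop :=
  HomogSys Q10 Q1 (W Lv) (fun j => W (Uv j)) ∧
  HomogSys Q20 Q2 (W Mv) (fun j => W (Vv j)) ∧
  (∀ i : Fin n, W (Zv i) ≤ W (Uv (Fin.castAdd n1 i)) ⊔ W (Vv (Fin.castAdd n2 i))) ∧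
  (∀ i : Fin n, W (Uv (Fin.castAdd n1 i)) ≤ W (Zv i)) ∧
  (∀ i : Fin n, W (Vv (Fin.castAdd n2 i)) ≤ W (Zv i)) ∧
  W Lv ≤ 0 ∧ W Mv ≤ 0 ∧ (0:Trop) ≤ W Lv ⊔ W Mv ∧
  ((univ.sup fun j => W (Uv j)) + (univ.sup fun j => W (Uv j)) ≤ W Lv + W Sav) ∧
  ((univ.sup fun j => W (Vv j)) + (univ.sup fun j => W (Vv j)) ≤ W Mv + W Sbv)

lemma evalAff (c : Trop) (g : VI n n1 n2 → Trop) (w : Fin (n + nAux n n1 n2) → Trop) :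
    tropAff c (fun k => g ((eVar n n1 n2).symm k)) w =
      c ⊔ ((univ.sup fun i : Fin n => g (Zv i) + w (eVar n n1 n2 (Zv i))) ⊔
        ((univ.sup fun j => g (Uv j) + w (eVar n n1 n2 (Uv j))) ⊔
        ((univ.sup fun j => g (Vv j) + w (eVar n n1 n2 (Vv j))) ⊔
        ((g Lv + w (eVar n n1 n2 Lv)) ⊔ ((g Mv + w (eVar n n1 n2 Mv)) ⊔
        ((g Sav + w (eVar n n1 n2 Sav)) ⊔ (g Sbv + w (eVar n n1 n2 Sbv)))))))) := by
  unfold tropAff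
  rw [supequiv (eVar n n1 n2) (fun k => g ((eVar n n1 n2).symm k) + w k)]
  simp only [Equiv.symm_apply_apply]
  rw [supVI (fun v => g v + w (eVar n n1 n2 v))]


lemma evalDm (r : RI m1 m2 n) (w : Fin (n + nAux n n1 n2) → Trop) :
    tropAff (dm0 r) (fun k => dmF Q10 Q1 Q20 Q2 ((eVar n n1 n2).symm k) r) w =
      dm0 r ⊔ ((univ.sup fun i : Fin n => dmF Q10 Q1 Q20 Q2 (Zv i) r + w (eVar n n1 n2 (Zv i))) ⊔
        ((univ.sup fun j => dmF Q10 Q1 Q20 Q2 (Uv j) r + w (eVar n n1 n2 (Uv j))) ⊔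
        ((univ.sup fun j => dmF Q10 Q1 Q20 Q2 (Vv j) r + w (eVar n n1 n2 (Vv j))) ⊔
        ((dmF Q10 Q1 Q20 Q2 Lv r + w (eVar n n1 n2 Lv)) ⊔
         ((dmF Q10 Q1 Q20 Q2 Mv r + w (eVar n n1 n2 Mv)) ⊔
        ((dmF Q10 Q1 Q20 Q2 Sav r + w (eVar n n1 n2 Sav)) ⊔
         (dmF Q10 Q1 Q20 Q2 Sbv r + w (eVar n n1 n2 Sbv)))))))) :=
  evalAff (dm0 r) (fun v => dmF Q10 Q1 Q20 Q2 v r) w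

lemma evalDp (r : RI m1 m2 n) (w : Fin (n + nAux n n1 n2) → Trop) :
    tropAff (dp0 r) (fun k => dpF Q10 Q1 Q20 Q2 ((eVar n n1 n2).symm k) r) w =
      dp0 r ⊔ ((univ.sup fun i : Fin n => dpF Q10 Q1 Q20 Q2 (Zv i) r + w (eVar n n1 n2 (Zv i))) ⊔
        ((univ.sup fun j => dpF Q10 Q1 Q20 Q2 (Uv j) r + w (eVar n n1 n2 (Uv j))) ⊔
        ((univ.sup fun j => dpF Q10 Q1 Q20 Q2 (Vv j) r + w (eVar n n1 n2 (Vv j))) ⊔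
        ((dpF Q10 Q1 Q20 Q2 Lv r + w (eVar n n1 n2 Lv)) ⊔
         ((dpF Q10 Q1 Q20 Q2 Mv r + w (eVar n n1 n2 Mv)) ⊔
        ((dpF Q10 Q1 Q20 Q2 Sav r + w (eVar n n1 n2 Sav)) ⊔
         (dpF Q10 Q1 Q20 Q2 Sbv r + w (eVar n n1 n2 Sbv)))))))) :=
  evalAff (dp0 r) (fun v => dpF Q10 Q1 Q20 Q2 v r) w

lemma evalNd (r r' : RI m1 m2 n) (w : Fin (n + nAux n n1 n2) → Trop) :
    tropAff ⊥ (fun k => ndS Q10 Q1 Q20 Q2 ((eVar n n1 n2).symm k) r r') w =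
      (⊥:Trop) ⊔ ((univ.sup fun i : Fin n => ndS Q10 Q1 Q20 Q2 (Zv i) r r' + w (eVar n n1 n2 (Zv i))) ⊔
        ((univ.sup fun j => ndS Q10 Q1 Q20 Q2 (Uv j) r r' + w (eVar n n1 n2 (Uv j))) ⊔
        ((univ.sup fun j => ndS Q10 Q1 Q20 Q2 (Vv j) r r' + w (eVar n n1 n2 (Vv j))) ⊔
        ((ndS Q10 Q1 Q20 Q2 Lv r r' + w (eVar n n1 n2 Lv)) ⊔
         ((ndS Q10 Q1 Q20 Q2 Mv r r' + w (eVar n n1 n2 Mv)) ⊔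
        ((ndS Q10 Q1 Q20 Q2 Sav r r' + w (eVar n n1 n2 Sav)) ⊔
         (ndS Q10 Q1 Q20 Q2 Sbv r r' + w (eVar n n1 n2 Sbv)))))))) :=
  evalAff ⊥ (fun v => ndS Q10 Q1 Q20 Q2 v r r') w



/-- type-1 constraint of the big system, at a reindexed row -/
def T1 (w : Fin (n + nAux n n1 n2) → Trop) (r : RI m1 m2 n) : Prop :=
  tropAff ((bigQ0 (n := n) (m1 := m1) (m2 := m2)).Dm ((eRow m1 m2 n) r))
      (fun k => (QbigFam Q10 Q1 Q20 Q2 k).Dm ((eRow m1 m2 n) r)) w ≤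
    tropAff ((bigQ0 (n := n) (m1 := m1) (m2 := m2)).Dp ((eRow m1 m2 n) r))
      (fun k => (QbigFam Q10 Q1 Q20 Q2 k).Dp ((eRow m1 m2 n) r)) w

/-- type-2 constraint of the big system, at a reindexed pair of rows -/
def T2 (w : Fin (n + nAux n n1 n2) → Trop) (r r' : RI m1 m2 n) : Prop :=
  tropAff ((bigQ0 (n := n) (m1 := m1) (m2 := m2)).offdiag ((eRow m1 m2 n) r) ((eRow m1 m2 n) r'))
      (fun k => (QbigFam Q10 Q1 Q20 Q2 k).offdiag ((eRow m1 m2 n) r) ((eRow m1 m2 n) r')) w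
    + tropAff ((bigQ0 (n := n) (m1 := m1) (m2 := m2)).offdiag ((eRow m1 m2 n) r) ((eRow m1 m2 n) r'))
      (fun k => (QbigFam Q10 Q1 Q20 Q2 k).offdiag ((eRow m1 m2 n) r) ((eRow m1 m2 n) r')) w
  ≤ tropAff ((bigQ0 (n := n) (m1 := m1) (m2 := m2)).Dp ((eRow m1 m2 n) r))
      (fun k => (QbigFam Q10 Q1 Q20 Q2 k).Dp ((eRow m1 m2 n) r)) w
    + tropAff ((bigQ0 (n := n) (m1 := m1) (m2 := m2)).Dp ((eRow m1 m2 n) r'))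
      (fun k => (QbigFam Q10 Q1 Q20 Q2 k).Dp ((eRow m1 m2 n) r')) w

lemma mem_iff_T (w : Fin (n + nAux n n1 n2) → Trop) :
    w ∈ metzlerSpectrahedron (bigQ0 (n := n) (m1 := m1) (m2 := m2))
        (QbigFam Q10 Q1 Q20 Q2) ↔
      (∀ r, T1 Q10 Q1 Q20 Q2 w r) ∧
      (∀ r r', r ≠ r' → T2 Q10 Q1 Q20 Q2 w r r') := by
  constructor
  · intro h
    exact ⟨fun r => h.1 _, fun r r' hne => h.2 _ _ ((eRow m1 m2 n).injective.ne hne)⟩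
  · rintro ⟨h1, h2⟩
    refine ⟨fun i => ?_, fun i j hij => ?_⟩
    · have := h1 ((eRow m1 m2 n).symm i)
      unfold T1 at this
      rwa [Equiv.apply_symm_apply] at this
    · have hne : (eRow m1 m2 n).symm i ≠ (eRow m1 m2 n).symm j :=
        fun hh => hij (by rw [← Equiv.apply_symm_apply (eRow m1 m2 n) i, hh,
          Equiv.apply_symm_apply])
      have := h2 _ _ hne
      unfold T2 at this
      rwa [Equiv.apply_symm_apply, Equiv.apply_symm_apply] at this

lemma T1_R1 (w : Fin (n + nAux n n1 n2) → Trop) (i : Fin m1) :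
    T1 Q10 Q1 Q20 Q2 w (R1 i) ↔
      (univ.sup fun j => (Q1 j).Dm i + w (eVar n n1 n2 (Uv j))) ⊔ (Q10.Dm i + w (eVar n n1 n2 Lv))
      ≤ (univ.sup fun j => (Q1 j).Dp i + w (eVar n n1 n2 (Uv j))) ⊔ (Q10.Dp i + w (eVar n n1 n2 Lv)) := by
  unfold T1
  simp only [QbigFam, bigQ, bigQ0, Equiv.symm_apply_apply]
  rw [evalDm, evalDp]
  simp [dpF, dmF, dp0, dm0, sup_bot', WithBot.bot_add, zero_add]

lemma T1_R2 (w : Fin (n + nAux n n1 n2) → Trop) (i : Fin m2) :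
    T1 Q10 Q1 Q20 Q2 w (R2 i) ↔
      (univ.sup fun j => (Q2 j).Dm i + w (eVar n n1 n2 (Vv j))) ⊔ (Q20.Dm i + w (eVar n n1 n2 Mv))
      ≤ (univ.sup fun j => (Q2 j).Dp i + w (eVar n n1 n2 (Vv j))) ⊔ (Q20.Dp i + w (eVar n n1 n2 Mv)) := by
  unfold T1
  simp only [QbigFam, bigQ, bigQ0, Equiv.symm_apply_apply]
  rw [evalDm, evalDp]
  simp [dpF, dmF, dp0, dm0, sup_bot', WithBot.bot_add, zero_add]

lemma T1_R3 (w : Fin (n + nAux n n1 n2) → Trop) (i : Fin n) :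
    T1 Q10 Q1 Q20 Q2 w (R3 i) ↔
      w (eVar n n1 n2 (Zv i)) ≤
        w (eVar n n1 n2 (Uv (Fin.castAdd n1 i))) ⊔ w (eVar n n1 n2 (Vv (Fin.castAdd n2 i))) := by
  unfold T1
  simp only [QbigFam, bigQ, bigQ0, Equiv.symm_apply_apply]
  rw [evalDm, evalDp]
  simp [dpF, dmF, dp0, dm0, sup_bot', sup_single, WithBot.bot_add, zero_add]

lemma T1_R4 (w : Fin (n + nAux n n1 n2) → Trop) (i : Fin n) :
    T1 Q10 Q1 Q20 Q2 w (R4 i) ↔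
      w (eVar n n1 n2 (Uv (Fin.castAdd n1 i))) ≤ w (eVar n n1 n2 (Zv i)) := by
  unfold T1
  simp only [QbigFam, bigQ, bigQ0, Equiv.symm_apply_apply]
  rw [evalDm, evalDp]
  simp [dpF, dmF, dp0, dm0, sup_bot', sup_single, WithBot.bot_add, zero_add]

lemma T1_R5 (w : Fin (n + nAux n n1 n2) → Trop) (i : Fin n) :
    T1 Q10 Q1 Q20 Q2 w (R5 i) ↔
      w (eVar n n1 n2 (Vv (Fin.castAdd n2 i))) ≤ w (eVar n n1 n2 (Zv i)) := by
  unfold T1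
  simp only [QbigFam, bigQ, bigQ0, Equiv.symm_apply_apply]
  rw [evalDm, evalDp]
  simp [dpF, dmF, dp0, dm0, sup_bot', sup_single, WithBot.bot_add, zero_add]

lemma T1_X0 (w : Fin (n + nAux n n1 n2) → Trop) :
    T1 Q10 Q1 Q20 Q2 w X0 ↔ w (eVar n n1 n2 Lv) ≤ 0 := by
  unfold T1
  simp only [QbigFam, bigQ, bigQ0, Equiv.symm_apply_apply]
  rw [evalDm, evalDp]
  simp [dpF, dmF, dp0, dm0, sup_bot', WithBot.bot_add, zero_add]

lemma T1_X1 (w : Fin (n + nAux n n1 n2) → Trop) :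
    T1 Q10 Q1 Q20 Q2 w X1 ↔ w (eVar n n1 n2 Mv) ≤ 0 := by
  unfold T1
  simp only [QbigFam, bigQ, bigQ0, Equiv.symm_apply_apply]
  rw [evalDm, evalDp]
  simp [dpF, dmF, dp0, dm0, sup_bot', WithBot.bot_add, zero_add]

lemma T1_X2 (w : Fin (n + nAux n n1 n2) → Trop) :
    T1 Q10 Q1 Q20 Q2 w X2 ↔ (0:Trop) ≤ w (eVar n n1 n2 Lv) ⊔ w (eVar n n1 n2 Mv) := by
  unfold T1
  simp only [QbigFam, bigQ, bigQ0, Equiv.symm_apply_apply]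
  rw [evalDm, evalDp]
  simp [dpF, dmF, dp0, dm0, sup_bot', WithBot.bot_add, zero_add]

lemma T1_X3 (w : Fin (n + nAux n n1 n2) → Trop) : T1 Q10 Q1 Q20 Q2 w X3 := by
  unfold T1
  simp only [QbigFam, bigQ, bigQ0, Equiv.symm_apply_apply]
  rw [evalDm]
  simp [dmF, dm0, sup_bot', WithBot.bot_add]

lemma T1_X4 (w : Fin (n + nAux n n1 n2) → Trop) : T1 Q10 Q1 Q20 Q2 w X4 := by
  unfold T1
  simp only [QbigFam, bigQ, bigQ0, Equiv.symm_apply_apply]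
  rw [evalDm]
  simp [dmF, dm0, sup_bot', WithBot.bot_add]

lemma T1_X5 (w : Fin (n + nAux n n1 n2) → Trop) : T1 Q10 Q1 Q20 Q2 w X5 := by
  unfold T1
  simp only [QbigFam, bigQ, bigQ0, Equiv.symm_apply_apply]
  rw [evalDm]
  simp [dmF, dm0, sup_bot', WithBot.bot_add]

lemma T1_X6 (w : Fin (n + nAux n n1 n2) → Trop) : T1 Q10 Q1 Q20 Q2 w X6 := by
  unfold T1
  simp only [QbigFam, bigQ, bigQ0, Equiv.symm_apply_apply]
  rw [evalDm]
  simp [dmF, dm0, sup_bot', WithBot.bot_add]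

lemma t2_trivial (w : Fin (n + nAux n n1 n2) → Trop) (r r' : RI m1 m2 n)
    (hv : ∀ v : VI n n1 n2, ndS Q10 Q1 Q20 Q2 v r r' = ⊥) :
    T2 Q10 Q1 Q20 Q2 w r r' := by
  unfold T2
  simp only [QbigFam, bigQ, bigQ0, Equiv.symm_apply_apply]
  rw [evalNd]
  simp [hv, sup_bot', WithBot.bot_add, WithBot.add_bot]

lemma T2_R1R1 (w : Fin (n + nAux n n1 n2) → Trop) (i i' : Fin m1) :
    T2 Q10 Q1 Q20 Q2 w (R1 i) (R1 i') ↔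
      ((univ.sup fun j => (Q1 j).offdiag i i' + w (eVar n n1 n2 (Uv j))) ⊔
        (Q10.offdiag i i' + w (eVar n n1 n2 Lv)))
      + ((univ.sup fun j => (Q1 j).offdiag i i' + w (eVar n n1 n2 (Uv j))) ⊔
        (Q10.offdiag i i' + w (eVar n n1 n2 Lv)))
      ≤ ((univ.sup fun j => (Q1 j).Dp i + w (eVar n n1 n2 (Uv j))) ⊔
        (Q10.Dp i + w (eVar n n1 n2 Lv)))
      + ((univ.sup fun j => (Q1 j).Dp i' + w (eVar n n1 n2 (Uv j))) ⊔
        (Q10.Dp i' + w (eVar n n1 n2 Lv))) := by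
  have e1 : ∀ j : Fin (n+n1), (Q1 j).offdiag i i' ⊔ (Q1 j).offdiag i' i
      = (Q1 j).offdiag i i' := fun j => by rw [(Q1 j).offdiag_symm i' i, sup_idem]
  have e2 : Q10.offdiag i i' ⊔ Q10.offdiag i' i = Q10.offdiag i i' := by
    rw [Q10.offdiag_symm i' i, sup_idem]
  unfold T2
  simp only [QbigFam, bigQ, bigQ0, Equiv.symm_apply_apply]
  rw [evalNd, evalDp, evalDp]
  simp [ndS, ndF, dpF, dp0, sup_bot', WithBot.bot_add, zero_add, e1, e2]

lemma T2_R2R2 (w : Fin (n + nAux n n1 n2) → Trop) (i i' : Fin m2) :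
    T2 Q10 Q1 Q20 Q2 w (R2 i) (R2 i') ↔
      ((univ.sup fun j => (Q2 j).offdiag i i' + w (eVar n n1 n2 (Vv j))) ⊔
        (Q20.offdiag i i' + w (eVar n n1 n2 Mv)))
      + ((univ.sup fun j => (Q2 j).offdiag i i' + w (eVar n n1 n2 (Vv j))) ⊔
        (Q20.offdiag i i' + w (eVar n n1 n2 Mv)))
      ≤ ((univ.sup fun j => (Q2 j).Dp i + w (eVar n n1 n2 (Vv j))) ⊔
        (Q20.Dp i + w (eVar n n1 n2 Mv)))
      + ((univ.sup fun j => (Q2 j).Dp i' + w (eVar n n1 n2 (Vv j))) ⊔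
        (Q20.Dp i' + w (eVar n n1 n2 Mv))) := by
  have e1 : ∀ j : Fin (n+n2), (Q2 j).offdiag i i' ⊔ (Q2 j).offdiag i' i
      = (Q2 j).offdiag i i' := fun j => by rw [(Q2 j).offdiag_symm i' i, sup_idem]
  have e2 : Q20.offdiag i i' ⊔ Q20.offdiag i' i = Q20.offdiag i i' := by
    rw [Q20.offdiag_symm i' i, sup_idem]
  unfold T2
  simp only [QbigFam, bigQ, bigQ0, Equiv.symm_apply_apply]
  rw [evalNd, evalDp, evalDp]
  simp [ndS, ndF, dpF, dp0, sup_bot', WithBot.bot_add, zero_add, e1, e2]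

lemma T2_X3X4 (w : Fin (n + nAux n n1 n2) → Trop) :
    T2 Q10 Q1 Q20 Q2 w X3 X4 ↔
      (univ.sup fun j => w (eVar n n1 n2 (Uv j))) + (univ.sup fun j => w (eVar n n1 n2 (Uv j)))
      ≤ w (eVar n n1 n2 Lv) + w (eVar n n1 n2 Sav) := by
  unfold T2
  simp only [QbigFam, bigQ, bigQ0, Equiv.symm_apply_apply]
  rw [evalNd, evalDp, evalDp]
  simp [ndS, ndF, dpF, dp0, sup_bot', WithBot.bot_add, zero_add]

lemma T2_X4X3 (w : Fin (n + nAux n n1 n2) → Trop) :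
    T2 Q10 Q1 Q20 Q2 w X4 X3 ↔
      (univ.sup fun j => w (eVar n n1 n2 (Uv j))) + (univ.sup fun j => w (eVar n n1 n2 (Uv j)))
      ≤ w (eVar n n1 n2 Sav) + w (eVar n n1 n2 Lv) := by
  unfold T2
  simp only [QbigFam, bigQ, bigQ0, Equiv.symm_apply_apply]
  rw [evalNd, evalDp, evalDp]
  simp [ndS, ndF, dpF, dp0, sup_bot', WithBot.bot_add, zero_add]

lemma T2_X5X6 (w : Fin (n + nAux n n1 n2) → Trop) :
    T2 Q10 Q1 Q20 Q2 w X5 X6 ↔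
      (univ.sup fun j => w (eVar n n1 n2 (Vv j))) + (univ.sup fun j => w (eVar n n1 n2 (Vv j)))
      ≤ w (eVar n n1 n2 Mv) + w (eVar n n1 n2 Sbv) := by
  unfold T2
  simp only [QbigFam, bigQ, bigQ0, Equiv.symm_apply_apply]
  rw [evalNd, evalDp, evalDp]
  simp [ndS, ndF, dpF, dp0, sup_bot', WithBot.bot_add, zero_add]

lemma T2_X6X5 (w : Fin (n + nAux n n1 n2) → Trop) :
    T2 Q10 Q1 Q20 Q2 w X6 X5 ↔
      (univ.sup fun j => w (eVar n n1 n2 (Vv j))) + (univ.sup fun j => w (eVar n n1 n2 (Vv j)))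
      ≤ w (eVar n n1 n2 Sbv) + w (eVar n n1 n2 Mv) := by
  unfold T2
  simp only [QbigFam, bigQ, bigQ0, Equiv.symm_apply_apply]
  rw [evalNd, evalDp, evalDp]
  simp [ndS, ndF, dpF, dp0, sup_bot', WithBot.bot_add, zero_add]


set_option maxHeartbeats 1000000 in
lemma mem_big_iff (w : Fin (n + nAux n n1 n2) → Trop) :
    w ∈ metzlerSpectrahedron (bigQ0 (n := n) (m1 := m1) (m2 := m2))
        (QbigFam Q10 Q1 Q20 Q2) ↔
      BigCond Q10 Q1 Q20 Q2 (fun v => w (eVar n n1 n2 v)) := by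
  rw [mem_iff_T]
  constructor
  · rintro ⟨h1, h2⟩
    refine ⟨⟨fun i => ?_, fun i i' hii' => ?_⟩, ⟨fun i => ?_, fun i i' hii' => ?_⟩,
      fun i => ?_, fun i => ?_, fun i => ?_, ?_, ?_, ?_, ?_, ?_⟩
    · simpa using (T1_R1 Q10 Q1 Q20 Q2 w i).1 (h1 _)
    · simpa using (T2_R1R1 Q10 Q1 Q20 Q2 w i i').1
        (h2 _ _ (fun hh => hii' (Sum.inl.inj hh)))
    · simpa using (T1_R2 Q10 Q1 Q20 Q2 w i).1 (h1 _)
    · simpa using (T2_R2R2 Q10 Q1 Q20 Q2 w i i').1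
        (h2 _ _ (fun hh => hii' (Sum.inl.inj (Sum.inr.inj hh))))
    · simpa using (T1_R3 Q10 Q1 Q20 Q2 w i).1 (h1 _)
    · simpa using (T1_R4 Q10 Q1 Q20 Q2 w i).1 (h1 _)
    · simpa using (T1_R5 Q10 Q1 Q20 Q2 w i).1 (h1 _)
    · simpa using (T1_X0 Q10 Q1 Q20 Q2 w).1 (h1 _)
    · simpa using (T1_X1 Q10 Q1 Q20 Q2 w).1 (h1 _)
    · simpa using (T1_X2 Q10 Q1 Q20 Q2 w).1 (h1 _)
    · simpa using (T2_X3X4 Q10 Q1 Q20 Q2 w).1 (h2 _ _ (by simp [X3, X4]))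
    · simpa using (T2_X5X6 Q10 Q1 Q20 Q2 w).1 (h2 _ _ (by simp [X5, X6]))
  · rintro ⟨hA, hB, hC, hD, hE, hF, hG, hH, hI, hJ⟩
    constructor
    · intro r
      rcases r with i|i|i|i|i|⟨⟩|⟨⟩|⟨⟩|⟨⟩|⟨⟩|⟨⟩|⟨⟩
      · exact (T1_R1 Q10 Q1 Q20 Q2 w i).2 (by simpa using hA.1 i)
      · exact (T1_R2 Q10 Q1 Q20 Q2 w i).2 (by simpa using hB.1 i)
      · exact (T1_R3 Q10 Q1 Q20 Q2 w i).2 (by simpa using hC i)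
      · exact (T1_R4 Q10 Q1 Q20 Q2 w i).2 (by simpa using hD i)
      · exact (T1_R5 Q10 Q1 Q20 Q2 w i).2 (by simpa using hE i)
      · exact (T1_X0 Q10 Q1 Q20 Q2 w).2 (by simpa using hF)
      · exact (T1_X1 Q10 Q1 Q20 Q2 w).2 (by simpa using hG)
      · exact (T1_X2 Q10 Q1 Q20 Q2 w).2 (by simpa using hH)
      · exact T1_X3 Q10 Q1 Q20 Q2 w
      · exact T1_X4 Q10 Q1 Q20 Q2 w
      · exact T1_X5 Q10 Q1 Q20 Q2 w
      · exact T1_X6 Q10 Q1 Q20 Q2 w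
    · intro r r' hne
      rcases r with i|i|i|i|i|⟨⟩|⟨⟩|⟨⟩|⟨⟩|⟨⟩|⟨⟩|⟨⟩ <;>
        rcases r' with i'|i'|i'|i'|i'|⟨⟩|⟨⟩|⟨⟩|⟨⟩|⟨⟩|⟨⟩|⟨⟩ <;>
        first
          | (refine t2_trivial Q10 Q1 Q20 Q2 w _ _ ?_
             intro v
             rcases v with _|_|_|⟨⟩|⟨⟩|⟨⟩|⟨⟩ <;> exact bot_sup_eq (⊥ : Trop))
          | skip
      · exact (T2_R1R1 Q10 Q1 Q20 Q2 w i i').2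
          (by simpa using hA.2 i i' (fun hh => hne (by rw [hh])))
      · exact (T2_R2R2 Q10 Q1 Q20 Q2 w i i').2
          (by simpa using hB.2 i i' (fun hh => hne (by rw [hh])))
      · exact (T2_X3X4 Q10 Q1 Q20 Q2 w).2 (by simpa using hI)
      · exact (T2_X4X3 Q10 Q1 Q20 Q2 w).2
          (by simpa using le_trans hI (le_of_eq (add_comm _ _)))
      · exact (T2_X5X6 Q10 Q1 Q20 Q2 w).2 (by simpa using hJ)
      · exact (T2_X6X5 Q10 Q1 Q20 Q2 w).2
          (by simpa using le_trans hJ (le_of_eq (add_comm _ _)))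

lemma eVar_symm_castAdd (i : Fin n) :
    (eVar n n1 n2).symm (Fin.castAdd (nAux n n1 n2) i) = Zv i := by
  rw [← eVar_inl (n1 := n1) (n2 := n2) i, Equiv.symm_apply_apply]

end Char
end Stmt7Aux
namespace Stmt7Aux
section Final
variable {n n1 n2 m1 m2 : ℕ}
variable (Q10 : MetzlerData m1) (Q1 : Fin (n+n1) → MetzlerData m1)
variable (Q20 : MetzlerData m2) (Q2 : Fin (n+n2) → MetzlerData m2)

/-- the witness point of the big spectrahedron -/
noncomputable def Wit (l m : Trop) (xh : Fin (n+n1) → Trop) (yh : Fin (n+n2) → Trop) :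
    VI n n1 n2 → Trop
  | Zv i => (l + xh (Fin.castAdd n1 i)) ⊔ (m + yh (Fin.castAdd n2 i))
  | Uv j => l + xh j
  | Vv j => m + yh j
  | Lv => l
  | Mv => m
  | Sav => l + ((univ.sup fun j => xh j) + (univ.sup fun j => xh j))
  | Sbv => m + ((univ.sup fun j => yh j) + (univ.sup fun j => yh j))

lemma bigCond_Wit {l m : Trop} {xh : Fin (n+n1) → Trop} {yh : Fin (n+n2) → Trop}
    (hxh : xh ∈ metzlerSpectrahedron Q10 Q1) (hyh : yh ∈ metzlerSpectrahedron Q20 Q2)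
    (hlm : l ⊔ m = 0) :
    BigCond Q10 Q1 Q20 Q2 (Wit l m xh yh) := by
  refine ⟨?_, ?_, fun i => le_rfl, fun i => le_sup_left, fun i => le_sup_right,
    le_trans le_sup_left hlm.le, le_trans le_sup_right hlm.le, hlm.ge, ?_, ?_⟩
  · have h1 := homog_shift l ((homog_zero Q10 Q1 xh).2 hxh)
    rw [add_zero] at h1
    exact h1
  · have h1 := homog_shift m ((homog_zero Q20 Q2 yh).2 hyh)
    rw [add_zero] at h1
    exact h1
  · show (univ.sup fun j => l + xh j) + (univ.sup fun j => l + xh j) ≤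
      l + (l + ((univ.sup fun j => xh j) + (univ.sup fun j => xh j)))
    rw [← addsup]
    exact le_of_eq (by rw [add_add_add_comm, add_assoc])
  · show (univ.sup fun j => m + yh j) + (univ.sup fun j => m + yh j) ≤
      m + (m + ((univ.sup fun j => yh j) + (univ.sup fun j => yh j)))
    rw [← addsup]
    exact le_of_eq (by rw [add_add_add_comm, add_assoc])

lemma combo_eq (hne1 : (metzlerSpectrahedron Q10 Q1).Nonempty)
    (hne2 : (metzlerSpectrahedron Q20 Q2).Nonempty) :
    Combo (projFirst n n1 '' metzlerSpectrahedron Q10 Q1)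
        (projFirst n n2 '' metzlerSpectrahedron Q20 Q2) =
      projFirst n (nAux n n1 n2) ''
        metzlerSpectrahedron (bigQ0 (n := n) (m1 := m1) (m2 := m2))
          (QbigFam Q10 Q1 Q20 Q2) := by
  ext z
  constructor
  · rintro ⟨x, ⟨xh, hxh, rfl⟩, y, ⟨yh, hyh, rfl⟩, l, m, hlm, rfl⟩
    refine ⟨fun k => Wit l m xh yh ((eVar n n1 n2).symm k), ?_, ?_⟩
    · apply (mem_big_iff Q10 Q1 Q20 Q2 _).2
      have he : (fun v => Wit l m xh yh ((eVar n n1 n2).symm (eVar n n1 n2 v)))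
          = Wit l m xh yh := funext fun v => by rw [Equiv.symm_apply_apply]
      show BigCond Q10 Q1 Q20 Q2
        (fun v => Wit l m xh yh ((eVar n n1 n2).symm (eVar n n1 n2 v)))
      rw [he]
      exact bigCond_Wit Q10 Q1 Q20 Q2 hxh hyh hlm
    · funext i
      show Wit l m xh yh ((eVar n n1 n2).symm (Fin.castAdd _ i)) = _
      rw [eVar_symm_castAdd]
      rfl
  · rintro ⟨w, hw, rfl⟩
    obtain ⟨hA, hB, hC, hD, hE, hF, hG, hH, hI, hJ⟩ := (mem_big_iff Q10 Q1 Q20 Q2 w).1 hw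
    try simp only [] at hA hB hC hD hE hF hG hH hI hJ
    have hz : ∀ i : Fin n, projFirst n (nAux n n1 n2) w i = w (eVar n n1 n2 (Zv i)) :=
      fun i => by
        show w (Fin.castAdd _ i) = _
        rw [eVar_inl]
    have hZ : ∀ i, w (eVar n n1 n2 (Zv i)) =
        w (eVar n n1 n2 (Uv (Fin.castAdd n1 i))) ⊔ w (eVar n n1 n2 (Vv (Fin.castAdd n2 i))) :=
      fun i => le_antisymm (hC i) (sup_le (hD i) (hE i))
    rcases eq_or_ne (w (eVar n n1 n2 Lv)) ⊥ with hL | hL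
    · have hM : w (eVar n n1 n2 Mv) = 0 := by
        refine le_antisymm hG ?_
        rw [hL] at hH
        simpa using hH
      have hU : ∀ j, w (eVar n n1 n2 (Uv j)) = ⊥ := by
        have h0 : (univ.sup fun j => w (eVar n n1 n2 (Uv j))) = ⊥ := by
          apply twobot
          rw [hL, WithBot.bot_add] at hI
          exact hI
        exact fun j => le_bot_iff.1 (le_trans
          (Finset.le_sup (f := fun j => w (eVar n n1 n2 (Uv j))) (Finset.mem_univ j)) h0.le)
      obtain ⟨xh0, hxh0⟩ := hne1
      refine ⟨projFirst n n1 xh0, ⟨xh0, hxh0, rfl⟩,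
        projFirst n n2 (fun j => w (eVar n n1 n2 (Vv j))), ⟨_, ?_, rfl⟩, ⊥, 0, by simp, ?_⟩
      · apply (homog_zero Q20 Q2 _).1
        rw [hM] at hB
        exact hB
      · funext i
        rw [hz i, hZ i, hU (Fin.castAdd n1 i)]
        show ⊥ ⊔ _ = (⊥ + _) ⊔ ((0:Trop) + _)
        simp [projFirst]
    · obtain ⟨r, hr⟩ := WithBot.ne_bot_iff_exists.1 hL
      rcases eq_or_ne (w (eVar n n1 n2 Mv)) ⊥ with hM | hM
      · have hL0 : w (eVar n n1 n2 Lv) = 0 := by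
          refine le_antisymm hF ?_
          rw [hM] at hH
          simpa using hH
        have hV : ∀ j, w (eVar n n1 n2 (Vv j)) = ⊥ := by
          have h0 : (univ.sup fun j => w (eVar n n1 n2 (Vv j))) = ⊥ := by
            apply twobot
            rw [hM, WithBot.bot_add] at hJ
            exact hJ
          exact fun j => le_bot_iff.1 (le_trans
            (Finset.le_sup (f := fun j => w (eVar n n1 n2 (Vv j))) (Finset.mem_univ j)) h0.le)
        obtain ⟨yh0, hyh0⟩ := hne2
        refine ⟨projFirst n n1 (fun j => w (eVar n n1 n2 (Uv j))), ⟨_, ?_, rfl⟩,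
          projFirst n n2 yh0, ⟨yh0, hyh0, rfl⟩, 0, ⊥, by simp, ?_⟩
        · apply (homog_zero Q10 Q1 _).1
          rw [hL0] at hA
          exact hA
        · funext i
          rw [hz i, hZ i, hV (Fin.castAdd n2 i)]
          show _ ⊔ ⊥ = ((0:Trop) + _) ⊔ (⊥ + _)
          simp [projFirst]
      · obtain ⟨s, hs⟩ := WithBot.ne_bot_iff_exists.1 hM
        have hlm : w (eVar n n1 n2 Lv) ⊔ w (eVar n n1 n2 Mv) = 0 :=
          le_antisymm (sup_le hF hG) hH
        rw [← hr] at hA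
        rw [← hs] at hB
        refine ⟨projFirst n n1 (fun j => ((-r:ℝ):Trop) + w (eVar n n1 n2 (Uv j))),
          ⟨_, homog_real hA, rfl⟩,
          projFirst n n2 (fun j => ((-s:ℝ):Trop) + w (eVar n n1 n2 (Vv j))),
          ⟨_, homog_real hB, rfl⟩,
          w (eVar n n1 n2 Lv), w (eVar n n1 n2 Mv), hlm, ?_⟩
        funext i
        rw [hz i, hZ i]
        show _ = (w (eVar n n1 n2 Lv) + (((-r:ℝ):Trop) + w (eVar n n1 n2 (Uv (Fin.castAdd n1 i)))))
          ⊔ (w (eVar n n1 n2 Mv) + (((-s:ℝ):Trop) + w (eVar n n1 n2 (Vv (Fin.castAdd n2 i)))))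
        rw [← hr, ← hs, negcancel, negcancel]

end Final
end Stmt7Aux
theorem stmt7 {n : ℕ} (S1 S2 : Set (Fin n → Trop))
    (h1 : IsProjMetzlerSpectrahedron S1) (h2 : IsProjMetzlerSpectrahedron S2) :
    IsProjMetzlerSpectrahedron (tconv (S1 ∪ S2)) := by
  obtain ⟨n1, m1, hm1, Q10, Q1, hS1⟩ := h1
  obtain ⟨n2, m2, hm2, Q20, Q2, hS2⟩ := h2
  have hc1 : TropicallyConvex S1 := by
    rw [hS1]; exact Stmt7Aux.proj_convex (Stmt7Aux.spec_convex Q10 Q1)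
  have hc2 : TropicallyConvex S2 := by
    rw [hS2]; exact Stmt7Aux.proj_convex (Stmt7Aux.spec_convex Q20 Q2)
  rcases Set.eq_empty_or_nonempty S1 with hE1 | hne1
  · rw [hE1, Set.empty_union, Stmt7Aux.tconv_eq hc2]
    exact ⟨n2, m2, hm2, Q20, Q2, hS2⟩
  rcases Set.eq_empty_or_nonempty S2 with hE2 | hne2
  · rw [hE2, Set.union_empty, Stmt7Aux.tconv_eq hc1]
    exact ⟨n1, m1, hm1, Q10, Q1, hS1⟩
  obtain ⟨x0, hx0⟩ := hne1
  obtain ⟨y0, hy0⟩ := hne2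
  rw [Stmt7Aux.tconv_union_eq hc1 hc2 hx0 hy0]
  subst hS1
  subst hS2
  refine ⟨Stmt7Aux.nAux n n1 n2, Stmt7Aux.MBig m1 m2 n, Stmt7Aux.MBig_pos,
    Stmt7Aux.bigQ0, Stmt7Aux.QbigFam Q10 Q1 Q20 Q2, ?_⟩
  exact Stmt7Aux.combo_eq Q10 Q1 Q20 Q2
    (Set.Nonempty.of_image ⟨x0, hx0⟩) (Set.Nonempty.of_image ⟨y0, hy0⟩)
end

section
/- Let S ⊆ ℝⁿ be a nonempty closed real tropical cone, and define F : ℝⁿ → ℝⁿ by F_k(x) = sup { y_k : y ∈ S, y ≤ x } for each k ∈ [n] (coordinatewise inequality). Then: (1) for every x ∈ ℝⁿ the set {y ∈ S : y ≤ x} is nonempty and each supremum is attained, and in fact F(x) ∈ S; (2) F is monotone and additively homogeneous; (3) S = {x ∈ ℝⁿ : x ≤ F(x)}; and (4) if moreover S is semilinear, then F is semilinear. -/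
open Finset

lemma basic_of_fintype {d : ℕ} {ι κ : Type} [Fintype ι] [Fintype κ]
    (A : ι → Fin d → ℚ) (b : ι → ℝ) (C : κ → Fin d → ℚ) (c : κ → ℝ) :
    BasicSemilinear {x : Fin d → ℝ |
      (∀ i, ∑ j, (A i j : ℝ) * x j > b i) ∧ (∀ i, ∑ j, (C i j : ℝ) * x j = c i)} := by
  have e := Fintype.equivFin ι
  have f := Fintype.equivFin κ
  refine ⟨_, _, fun i => A (e.symm i), fun i => b (e.symm i),
    fun i => C (f.symm i), fun i => c (f.symm i), ?_⟩
  ext x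
  simp only [Set.mem_setOf_eq]
  constructor
  · rintro ⟨h1, h2⟩; exact ⟨fun i => h1 (e.symm i), fun i => h2 (f.symm i)⟩
  · rintro ⟨h1, h2⟩
    refine ⟨fun i => ?_, fun i => ?_⟩
    · simpa using h1 (e i)
    · simpa using h2 (f i)

lemma semilinear_iUnion_basic {d : ℕ} {ι : Type} [Fintype ι] (g : ι → Set (Fin d → ℝ))
    (h : ∀ i, BasicSemilinear (g i)) : Semilinear (⋃ i, g i) := by
  have e := Fintype.equivFin ι
  refine ⟨_, fun i => g (e.symm i), fun i => h _, ?_⟩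
  ext x
  simp only [Set.mem_iUnion]
  exact ⟨fun ⟨i, hi⟩ => ⟨e i, by simpa using hi⟩, fun ⟨i, hi⟩ => ⟨e.symm i, hi⟩⟩

lemma Semilinear.of_basic {d : ℕ} {S : Set (Fin d → ℝ)} (h : BasicSemilinear S) :
    Semilinear S := by
  have := semilinear_iUnion_basic (fun _ : Unit => S) (fun _ => h)
  rwa [Set.iUnion_const] at this

lemma semilinear_iUnion {d : ℕ} {ι : Type} [Fintype ι] (f : ι → Set (Fin d → ℝ))
    (h : ∀ i, Semilinear (f i)) : Semilinear (⋃ i, f i) := by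
  choose N g hg hfg using h
  have : (⋃ i, f i) = ⋃ p : Σ i : ι, Fin (N i), g p.1 p.2 := by
    ext x
    simp only [Set.mem_iUnion, Sigma.exists]
    constructor
    · rintro ⟨i, hi⟩
      rw [hfg i] at hi
      obtain ⟨j, hj⟩ := Set.mem_iUnion.1 hi
      exact ⟨i, j, hj⟩
    · rintro ⟨i, j, hj⟩; exact ⟨i, by rw [hfg i]; exact Set.mem_iUnion.2 ⟨j, hj⟩⟩
  rw [this]
  exact semilinear_iUnion_basic _ (fun p => hg p.1 p.2)

lemma basic_iInter {d : ℕ} {ι : Type} [Fintype ι] (g : ι → Set (Fin d → ℝ))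
    (h : ∀ i, BasicSemilinear (g i)) : BasicSemilinear (⋂ i, g i) := by
  choose p q A b C c hg using h
  have := basic_of_fintype (ι := Σ i : ι, Fin (p i)) (κ := Σ i : ι, Fin (q i))
    (fun s => A s.1 s.2) (fun s => b s.1 s.2) (fun s => C s.1 s.2) (fun s => c s.1 s.2)
  convert this using 1
  ext x
  simp only [Set.mem_iInter, Set.mem_setOf_eq, Sigma.forall]
  constructor
  · intro hx
    constructor <;> intro i j <;> have := hx i <;> rw [hg i] at this
    · exact this.1 j
    · exact this.2 j
  · rintro ⟨h1, h2⟩ i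
    rw [hg i]; exact ⟨h1 i, h2 i⟩

lemma semilinear_iInter {d : ℕ} {ι : Type} [Fintype ι] (f : ι → Set (Fin d → ℝ))
    (h : ∀ i, Semilinear (f i)) : Semilinear (⋂ i, f i) := by
  choose N g hg hfg using h
  classical
  have key : (⋂ i, f i) = ⋃ c : ∀ i : ι, Fin (N i), ⋂ i, g i (c i) := by
    ext x
    simp only [Set.mem_iInter, Set.mem_iUnion]
    constructor
    · intro hx
      have : ∀ i, ∃ j, x ∈ g i j := by
        intro i; have := hx i; rw [hfg i] at this; simpa [Set.mem_iUnion] using this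
      obtain ⟨c, hc⟩ := Classical.axiom_of_choice this
      exact ⟨c, hc⟩
    · rintro ⟨c, hc⟩ i
      rw [hfg i]; exact Set.mem_iUnion.2 ⟨c i, hc i⟩
  rw [key]
  exact semilinear_iUnion_basic _ (fun c => basic_iInter _ (fun i => hg i (c i)))

lemma Semilinear.inter {d : ℕ} {S T : Set (Fin d → ℝ)} (hS : Semilinear S)
    (hT : Semilinear T) : Semilinear (S ∩ T) := by
  have := semilinear_iInter (fun b : Bool => if b then S else T)
    (by intro b; cases b <;> simpa)
  have e : (⋂ b : Bool, if b then S else T) = S ∩ T := by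
    ext x; simp [Bool.forall_bool, and_comm]
  rwa [e] at this

lemma Semilinear.union {d : ℕ} {S T : Set (Fin d → ℝ)} (hS : Semilinear S)
    (hT : Semilinear T) : Semilinear (S ∪ T) := by
  have := semilinear_iUnion (fun b : Bool => if b then S else T)
    (by intro b; cases b <;> simpa)
  have e : (⋃ b : Bool, if b then S else T) = S ∪ T := by
    ext x; simp [Bool.exists_bool, or_comm]
  rwa [e] at this

-- single strict inequality
lemma basic_gt {d : ℕ} (a : Fin d → ℚ) (r : ℝ) :
    BasicSemilinear {x : Fin d → ℝ | ∑ j, (a j : ℝ) * x j > r} := by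
  have := basic_of_fintype (ι := Unit) (κ := Empty) (fun _ => a) (fun _ => r)
    (fun e => e.elim) (fun e => e.elim)
  convert this using 1
  ext x; simp

lemma basic_eq {d : ℕ} (a : Fin d → ℚ) (r : ℝ) :
    BasicSemilinear {x : Fin d → ℝ | ∑ j, (a j : ℝ) * x j = r} := by
  have := basic_of_fintype (ι := Empty) (κ := Unit) (fun e => e.elim) (fun e => e.elim)
    (fun _ => a) (fun _ => r)
  convert this using 1
  ext x; simp

lemma sum_neg_coeff {d : ℕ} (a : Fin d → ℚ) (x : Fin d → ℝ) :
    ∑ j, ((-a j : ℚ) : ℝ) * x j = -∑ j, (a j : ℝ) * x j := by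
  rw [← Finset.sum_neg_distrib]
  exact Finset.sum_congr rfl (fun j _ => by push_cast; ring)

lemma semilinear_le {d : ℕ} (a : Fin d → ℚ) (r : ℝ) :
    Semilinear {x : Fin d → ℝ | ∑ j, (a j : ℝ) * x j ≤ r} := by
  have h1 := Semilinear.of_basic (basic_gt (fun j => -a j) (-r))
  have h2 := Semilinear.of_basic (basic_eq a r)
  have := h1.union h2
  convert this using 1
  ext x
  simp only [Set.mem_setOf_eq, Set.mem_union, sum_neg_coeff]
  constructor
  · intro h; rcases lt_or_eq_of_le h with h | h
    · exact Or.inl (by linarith)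
    · exact Or.inr h
  · rintro (h | h) <;> [linarith; exact le_of_eq h]

lemma semilinear_ne {d : ℕ} (a : Fin d → ℚ) (r : ℝ) :
    Semilinear {x : Fin d → ℝ | ∑ j, (a j : ℝ) * x j ≠ r} := by
  have h1 := Semilinear.of_basic (basic_gt a r)
  have h2 := Semilinear.of_basic (basic_gt (fun j => -a j) (-r))
  have := h1.union h2
  convert this using 1
  ext x
  simp only [Set.mem_setOf_eq, Set.mem_union, sum_neg_coeff]
  constructor
  · intro h; rcases lt_or_gt_of_ne h with h | h
    · exact Or.inr (by linarith)
    · exact Or.inl h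
  · rintro (h | h) <;> intro he <;> rw [he] at h <;> simp at h <;> linarith

lemma basic_compl {d : ℕ} {S : Set (Fin d → ℝ)} (h : BasicSemilinear S) :
    Semilinear Sᶜ := by
  obtain ⟨p, q, A, b, C, c, rfl⟩ := h
  have : {x : Fin d → ℝ | (∀ i, ∑ j, (A i j : ℝ) * x j > b i) ∧
      (∀ i, ∑ j, (C i j : ℝ) * x j = c i)}ᶜ =
      (⋃ i, {x | ∑ j, (A i j : ℝ) * x j ≤ b i}) ∪
      (⋃ i, {x | ∑ j, (C i j : ℝ) * x j ≠ c i}) := by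
    ext x
    simp only [Set.mem_compl_iff, Set.mem_setOf_eq, Set.mem_union, Set.mem_iUnion,
      not_and_or, not_forall, not_lt]
  rw [this]
  exact (semilinear_iUnion _ (fun i => semilinear_le _ _)).union
    (semilinear_iUnion _ (fun i => semilinear_ne _ _))

lemma Semilinear.compl {d : ℕ} {S : Set (Fin d → ℝ)} (h : Semilinear S) :
    Semilinear Sᶜ := by
  obtain ⟨N, f, hb, rfl⟩ := h
  rw [Set.compl_iUnion]
  exact semilinear_iInter _ (fun i => basic_compl (hb i))

lemma Semilinear.preimage {d e : ℕ} (M : Fin d → Fin e → ℚ) {S : Set (Fin d → ℝ)}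
    (hS : Semilinear S) : Semilinear {x : Fin e → ℝ | (fun i => ∑ j, (M i j : ℝ) * x j) ∈ S} := by
  obtain ⟨N, f, hb, rfl⟩ := hS
  have : {x : Fin e → ℝ | (fun i => ∑ j, (M i j : ℝ) * x j) ∈ ⋃ i, f i} =
      ⋃ i, {x : Fin e → ℝ | (fun i' => ∑ j, (M i' j : ℝ) * x j) ∈ f i} := by
    ext x; simp
  rw [this]
  refine semilinear_iUnion _ (fun i => ?_)
  obtain ⟨p, q, A, b, C, c, hf⟩ := hb i
  refine Semilinear.of_basic ?_
  have key : ∀ (v : Fin d → ℚ) (x : Fin e → ℝ),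
      ∑ i, (v i : ℝ) * (∑ j, (M i j : ℝ) * x j) = ∑ j, ((∑ i, v i * M i j : ℚ) : ℝ) * x j := by
    intro v x
    calc ∑ i, (v i : ℝ) * ∑ j, (M i j : ℝ) * x j
        = ∑ i, ∑ j, (v i : ℝ) * ((M i j : ℝ) * x j) := by simp [Finset.mul_sum]
      _ = ∑ j, ∑ i, (v i : ℝ) * ((M i j : ℝ) * x j) := Finset.sum_comm
      _ = ∑ j, ((∑ i, v i * M i j : ℚ) : ℝ) * x j := by
          refine Finset.sum_congr rfl (fun j _ => ?_)
          push_cast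
          rw [Finset.sum_mul]
          exact Finset.sum_congr rfl (fun i _ => by ring)
  refine ⟨p, q, fun k j => ∑ i, A k i * M i j, b, fun k j => ∑ i, C k i * M i j, c, ?_⟩
  ext x
  rw [hf]
  simp only [Set.mem_setOf_eq]
  constructor
  · rintro ⟨h1, h2⟩
    exact ⟨fun k => by rw [← key]; exact h1 k, fun k => by rw [← key]; exact h2 k⟩
  · rintro ⟨h1, h2⟩
    exact ⟨fun k => by rw [key]; exact h1 k, fun k => by rw [key]; exact h2 k⟩

lemma indicator_sum {e : ℕ} (u : Fin e) (x : Fin e → ℝ) :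
    ∑ j, (((if j = u then 1 else 0 : ℚ)) : ℝ) * x j = x u := by
  rw [Finset.sum_eq_single u] <;> simp +contextual

lemma indicator_sum' {e : ℕ} (u : Fin e) (x : Fin e → ℝ) :
    ∑ j, (if j = u then (1:ℝ) else 0) * x j = x u := by
  rw [Finset.sum_eq_single u] <;> simp +contextual

/-- coordinate-selection preimage -/
lemma semilinear_comp {d e : ℕ} (σ : Fin d → Fin e) {S : Set (Fin d → ℝ)}
    (h : Semilinear S) : Semilinear {x : Fin e → ℝ | (fun i => x (σ i)) ∈ S} := by
  have := h.preimage (fun i j => if j = σ i then 1 else 0)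
  convert this using 1
  ext x
  simp only [Set.mem_setOf_eq, indicator_sum]

lemma diff_sum {e : ℕ} (u v : Fin e) (h : u ≠ v) (x : Fin e → ℝ) :
    ∑ j, ((((if j = v then 1 else 0) - (if j = u then 1 else 0) : ℚ)) : ℝ) * x j
      = x v - x u := by
  simp [Rat.cast_sub, sub_mul, Finset.sum_sub_distrib, _root_.indicator_sum,
    _root_.indicator_sum']

lemma semilinear_lt_coord {e : ℕ} (u v : Fin e) (h : u ≠ v) :
    Semilinear {x : Fin e → ℝ | x u < x v} := by
  have := Semilinear.of_basic (basic_gt (fun j => (if j = v then 1 else 0 : ℚ) - (if j = u then 1 else 0)) 0)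
  convert this using 1
  ext x
  simp only [Set.mem_setOf_eq, diff_sum u v h]
  constructor <;> intro <;> linarith

lemma semilinear_le_coord {e : ℕ} (u v : Fin e) (h : u ≠ v) :
    Semilinear {x : Fin e → ℝ | x u ≤ x v} := by
  have := semilinear_le (fun j => (if j = u then 1 else 0 : ℚ) - (if j = v then 1 else 0)) 0
  convert this using 1
  ext x
  simp only [Set.mem_setOf_eq, diff_sum v u (Ne.symm h)]
  constructor <;> intro <;> linarith

/-- Key one-variable elimination fact over ℝ. -/
lemma exists_t_iff {ι : Type} [Fintype ι] (a L b : ι → ℝ) :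
    (∃ t : ℝ, ∀ i, L i + a i * t > b i) ↔
      ((∀ i, a i = 0 → L i > b i) ∧
       ∀ i j, 0 < a i → a j < 0 → a i * (L j - b j) > a j * (L i - b i)) := by
  classical
  constructor
  · rintro ⟨t, ht⟩
    constructor
    · intro i h0
      have := ht i; rw [h0] at this; linarith
    · intro i j hi hj
      have h1 : a i * t > b i - L i := by have := ht i; linarith
      have h2 : a j * t > b j - L j := by have := ht j; linarith
      nlinarith
  · rintro ⟨h0, hcross⟩
    -- lower bounds from a i > 0, upper from a j < 0
    set lo : Finset ι := Finset.univ.filter (fun i => 0 < a i) with hlo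
    set up : Finset ι := Finset.univ.filter (fun i => a i < 0) with hup
    have key : ∀ t : ℝ, (∀ i ∈ lo, (b i - L i) / a i < t) → (∀ j ∈ up, t < (b j - L j) / a j) →
        ∀ i, L i + a i * t > b i := by
      intro t hlot hupt i
      rcases lt_trichotomy (a i) 0 with h | h | h
      · have h1 := hupt i (by simp [hup, h])
        have h2 : b i - L i < t * a i := (lt_div_iff_of_neg h).1 h1
        nlinarith
      · have := h0 i h; rw [h]; linarith
      · have h1 := hlot i (by simp [hlo, h])
        have h2 : b i - L i < t * a i := (div_lt_iff₀ h).1 h1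
        nlinarith
    by_cases hl : lo.Nonempty
    · by_cases hu : up.Nonempty
      · set tl := lo.sup' hl (fun i => (b i - L i) / a i)
        set tu := up.inf' hu (fun j => (b j - L j) / a j)
        have htlu : tl < tu := by
          rw [Finset.sup'_lt_iff]
          intro i hi
          rw [Finset.lt_inf'_iff]
          intro j hj
          have hai : 0 < a i := (Finset.mem_filter.1 hi).2
          have haj : a j < 0 := (Finset.mem_filter.1 hj).2
          have hne_i : a i ≠ 0 := ne_of_gt hai
          have hne_j : a j ≠ 0 := ne_of_lt haj
          have hmain : ((b i - L i)/a i) * (a i * -a j) < ((b j - L j)/a j) * (a i * -a j) := by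
            have e1 : ((b i - L i)/a i) * (a i * -a j) = (b i - L i) * (-a j) := by
              field_simp
            have e2 : ((b j - L j)/a j) * (a i * -a j) = (b j - L j) * (-a i) := by
              field_simp
            rw [e1, e2]
            nlinarith [hcross i j hai haj]
          exact lt_of_mul_lt_mul_right hmain (le_of_lt (mul_pos hai (neg_pos.2 haj)))
        refine ⟨(tl + tu) / 2, key _ (fun i hi => ?_) (fun j hj => ?_)⟩
        · have := Finset.le_sup' (fun i => (b i - L i) / a i) hi
          linarith
        · have := Finset.inf'_le (fun j => (b j - L j) / a j) hj
          linarith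
      · -- no upper bounds
        refine ⟨lo.sup' hl (fun i => (b i - L i) / a i) + 1, key _ (fun i hi => ?_) (fun j hj => ?_)⟩
        · have := Finset.le_sup' (fun i => (b i - L i) / a i) hi
          linarith
        · exact absurd ⟨j, hj⟩ hu
    · by_cases hu : up.Nonempty
      · refine ⟨up.inf' hu (fun j => (b j - L j) / a j) - 1, key _ (fun i hi => ?_) (fun j hj => ?_)⟩
        · exact absurd ⟨i, hi⟩ hl
        · have := Finset.inf'_le (fun j => (b j - L j) / a j) hj
          linarith
      · refine ⟨0, key _ (fun i hi => absurd ⟨i, hi⟩ hl) (fun j hj => absurd ⟨j, hj⟩ hu)⟩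

lemma proj1_basic {d : ℕ} {T : Set (Fin (d+1) → ℝ)} (h : BasicSemilinear T) :
    BasicSemilinear {x : Fin d → ℝ | ∃ t, Fin.snoc x t ∈ T} := by
  classical
  obtain ⟨p, q, A, b, C, c, rfl⟩ := h
  set La : Fin p → Fin d → ℚ := fun i j => A i (Fin.castSucc j) with hLa
  set ad : Fin p → ℚ := fun i => A i (Fin.last d) with had
  set Lc : Fin q → Fin d → ℚ := fun i j => C i (Fin.castSucc j) with hLc
  set cd : Fin q → ℚ := fun i => C i (Fin.last d) with hcd
  have hsplitA : ∀ (i : Fin p) (x : Fin d → ℝ) (t : ℝ),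
      ∑ j, (A i j : ℝ) * (Fin.snoc x t : Fin (d+1) → ℝ) j = (∑ j, (La i j : ℝ) * x j) + (ad i : ℝ) * t := by
    intro i x t
    rw [Fin.sum_univ_castSucc]
    simp [hLa, had, Fin.snoc_castSucc, Fin.snoc_last]
  have hsplitC : ∀ (i : Fin q) (x : Fin d → ℝ) (t : ℝ),
      ∑ j, (C i j : ℝ) * (Fin.snoc x t : Fin (d+1) → ℝ) j = (∑ j, (Lc i j : ℝ) * x j) + (cd i : ℝ) * t := by
    intro i x t
    rw [Fin.sum_univ_castSucc]
    simp [hLc, hcd, Fin.snoc_castSucc, Fin.snoc_last]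
  have hmem : ∀ x : Fin d → ℝ,
      (∃ t, Fin.snoc x t ∈ {y : Fin (d+1) → ℝ | (∀ i, ∑ j, (A i j : ℝ) * y j > b i) ∧
        (∀ i, ∑ j, (C i j : ℝ) * y j = c i)}) ↔
      ∃ t, (∀ i, (∑ j, (La i j : ℝ) * x j) + (ad i : ℝ) * t > b i) ∧
        (∀ i, (∑ j, (Lc i j : ℝ) * x j) + (cd i : ℝ) * t = c i) := by
    intro x
    simp only [Set.mem_setOf_eq, hsplitA, hsplitC]
  by_cases hex : ∃ i0, cd i0 ≠ 0
  · obtain ⟨i0, hi0⟩ := hex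
    have hcd0 : ((cd i0 : ℚ) : ℝ) ≠ 0 := Rat.cast_ne_zero.mpr hi0
    have halg : ∀ (v : Fin d → ℚ) (α : ℚ) (x : Fin d → ℝ) (t : ℝ),
        (∑ j, (Lc i0 j : ℝ) * x j) + (cd i0 : ℝ) * t = c i0 →
        ∑ j, ((v j - (α / cd i0) * Lc i0 j : ℚ) : ℝ) * x j
          = (∑ j, (v j : ℝ) * x j) + (α : ℝ) * t - ((α / cd i0 : ℚ) : ℝ) * c i0 := by
      intro v α x t hE
      have h1 : ∑ j, ((v j - (α / cd i0) * Lc i0 j : ℚ) : ℝ) * x j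
          = (∑ j, (v j : ℝ) * x j) - ((α / cd i0 : ℚ) : ℝ) * ∑ j, (Lc i0 j : ℝ) * x j := by
        rw [Finset.mul_sum, ← Finset.sum_sub_distrib]
        exact Finset.sum_congr rfl fun j _ => by push_cast; ring
      rw [h1]
      have h2 : ((α / cd i0 : ℚ) : ℝ) * (cd i0 : ℝ) = (α : ℝ) := by
        rw [← Rat.cast_mul, div_mul_cancel₀ _ hi0]
      linear_combination (-((α / cd i0 : ℚ) : ℝ)) * hE + t * h2
    refine ⟨p, q, fun i j => La i j - (ad i / cd i0) * Lc i0 j,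
      fun i => b i - ((ad i / cd i0 : ℚ) : ℝ) * c i0,
      fun i j => Lc i j - (cd i / cd i0) * Lc i0 j,
      fun i => c i - ((cd i / cd i0 : ℚ) : ℝ) * c i0, ?_⟩
    ext x
    rw [Set.mem_setOf_eq, Set.mem_setOf_eq, hmem]
    constructor
    · rintro ⟨t, h1, h2⟩
      have hE := h2 i0
      constructor
      · intro i
        rw [halg (La i) (ad i) x t hE]
        have := h1 i; linarith
      · intro i
        rw [halg (Lc i) (cd i) x t hE]
        have := h2 i; linarith
    · rintro ⟨h1, h2⟩
      set t0 : ℝ := ((c i0 : ℝ) - ∑ j, (Lc i0 j : ℝ) * x j) / (cd i0 : ℝ) with ht0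
      have hE : (∑ j, (Lc i0 j : ℝ) * x j) + (cd i0 : ℝ) * t0 = c i0 := by
        rw [ht0, mul_div_cancel₀ _ hcd0]; ring
      refine ⟨t0, fun i => ?_, fun i => ?_⟩
      · have := h1 i
        rw [halg (La i) (ad i) x t0 hE] at this
        linarith
      · have := h2 i
        rw [halg (Lc i) (cd i) x t0 hE] at this
        linarith
  · push_neg at hex
    have hcross_sum : ∀ (i j : Fin p) (x : Fin d → ℝ),
        ∑ k, ((ad i * La j k - ad j * La i k : ℚ) : ℝ) * x k
          = (ad i : ℝ) * (∑ k, (La j k : ℝ) * x k) - (ad j : ℝ) * (∑ k, (La i k : ℝ) * x k) := by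
      intro i j x
      rw [Finset.mul_sum, Finset.mul_sum, ← Finset.sum_sub_distrib]
      exact Finset.sum_congr rfl fun k _ => by push_cast; ring
    have hbasic := basic_of_fintype
      (ι := {i : Fin p // ad i = 0} ⊕ ({i : Fin p // 0 < ad i} × {j : Fin p // ad j < 0}))
      (κ := Fin q)
      (Sum.elim (fun i => La i.1)
        (fun ij => fun k => ad ij.1.1 * La ij.2.1 k - ad ij.2.1 * La ij.1.1 k))
      (Sum.elim (fun i => b i.1)
        (fun ij => (ad ij.1.1 : ℝ) * b ij.2.1 - (ad ij.2.1 : ℝ) * b ij.1.1))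
      Lc c
    convert hbasic using 1
    ext x
    rw [Set.mem_setOf_eq, Set.mem_setOf_eq, hmem]
    have heq : ∀ t : ℝ, (∀ i, (∑ j, (Lc i j : ℝ) * x j) + (cd i : ℝ) * t = c i) ↔
        (∀ i, ∑ j, (Lc i j : ℝ) * x j = c i) := by
      intro t
      refine forall_congr' fun i => ?_
      rw [hex i]; push_cast; rw [zero_mul, add_zero]
    constructor
    · rintro ⟨t, h1, h2⟩
      have h2' := (heq t).1 h2
      have hx := (exists_t_iff (fun i => (ad i : ℝ)) (fun i => ∑ j, (La i j : ℝ) * x j) b).1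
        ⟨t, h1⟩
      refine ⟨?_, h2'⟩
      rintro (⟨i, hi⟩ | ⟨⟨i, hi⟩, ⟨j, hj⟩⟩)
      · simp only [Sum.elim_inl]
        exact hx.1 i (Rat.cast_eq_zero.mpr hi)
      · have := hx.2 i j (Rat.cast_pos.mpr hi) (by exact_mod_cast hj)
        simp only [Sum.elim_inr]
        rw [hcross_sum]
        linarith
    · rintro ⟨h1, h2⟩
      have hx : ∃ t, ∀ i, (∑ j, (La i j : ℝ) * x j) + (ad i : ℝ) * t > b i := by
        refine (exists_t_iff (fun i => (ad i : ℝ))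
          (fun i => ∑ j, (La i j : ℝ) * x j) b).2 ⟨?_, ?_⟩
        · intro i hi
          have hi' : ad i = 0 := by exact_mod_cast hi
          have := h1 (Sum.inl ⟨i, hi'⟩)
          simpa using this
        · intro i j hi hj
          have hi' : 0 < ad i := by exact_mod_cast hi
          have hj' : ad j < 0 := by exact_mod_cast hj
          have := h1 (Sum.inr ⟨⟨i, hi'⟩, ⟨j, hj'⟩⟩)
          simp only [Sum.elim_inr] at this
          rw [hcross_sum] at this
          linarith
      obtain ⟨t, ht⟩ := hx
      exact ⟨t, ht, (heq t).2 h2⟩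

lemma proj1_semilinear {d : ℕ} {T : Set (Fin (d+1) → ℝ)} (h : Semilinear T) :
    Semilinear {x : Fin d → ℝ | ∃ t, Fin.snoc x t ∈ T} := by
  obtain ⟨N, f, hb, rfl⟩ := h
  have : {x : Fin d → ℝ | ∃ t, Fin.snoc x t ∈ ⋃ i, f i} =
      ⋃ i, {x : Fin d → ℝ | ∃ t, Fin.snoc x t ∈ f i} := by
    ext x
    simp only [Set.mem_setOf_eq, Set.mem_iUnion]
    tauto
  rw [this]
  exact semilinear_iUnion _ (fun i => Semilinear.of_basic (proj1_basic (hb i)))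

lemma append_snoc {d e : ℕ} (x : Fin d → ℝ) (y : Fin e → ℝ) (t : ℝ) :
    Fin.append x (Fin.snoc y t) = Fin.snoc (Fin.append x y) t := by
  funext i
  refine Fin.addCases (fun j => ?_) (fun j => ?_) i
  · rw [Fin.append_left]
    have h1 : (Fin.castAdd (e+1) j : Fin (d+(e+1))) = Fin.castSucc (Fin.castAdd e j) := by
      ext; simp
    rw [h1, Fin.snoc_castSucc, Fin.append_left]
  · refine Fin.lastCases ?_ (fun j' => ?_) j
    · rw [Fin.append_right, Fin.snoc_last]
      have h1 : (Fin.natAdd d (Fin.last e) : Fin (d+(e+1))) = Fin.last (d+e) := by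
        ext; simp
      rw [h1]
      simp
    · rw [Fin.append_right, Fin.snoc_castSucc]
      have h1 : (Fin.natAdd d (Fin.castSucc j') : Fin (d+(e+1)))
          = Fin.castSucc (Fin.natAdd d j') := by
        ext; simp
      rw [h1, Fin.snoc_castSucc, Fin.append_right]

lemma append_zero {d : ℕ} (x : Fin d → ℝ) (y : Fin 0 → ℝ) :
    Fin.append x y = x := by
  funext i
  have h : Fin.castAdd 0 i = i := by ext; rfl
  conv_lhs => rw [← h]
  rw [Fin.append_left]

lemma projAppend {d e : ℕ} {T : Set (Fin (d + e) → ℝ)} (h : Semilinear T) :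
    Semilinear {x : Fin d → ℝ | ∃ y : Fin e → ℝ, Fin.append x y ∈ T} := by
  induction e with
  | zero =>
      have : {x : Fin d → ℝ | ∃ y : Fin 0 → ℝ, Fin.append x y ∈ T} = T := by
        ext x
        simp only [Set.mem_setOf_eq]
        constructor
        · rintro ⟨y, hy⟩; rwa [append_zero] at hy
        · intro hx; exact ⟨Fin.elim0, by rwa [append_zero]⟩
      rwa [this]
  | succ e ih =>
      have h1 : Semilinear {z : Fin (d + e) → ℝ | ∃ t, Fin.snoc z t ∈ T} :=
        proj1_semilinear h
      have h2 := ih h1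
      have : {x : Fin d → ℝ | ∃ y : Fin (e+1) → ℝ, Fin.append x y ∈ T} =
          {x : Fin d → ℝ | ∃ y : Fin e → ℝ, Fin.append x y ∈
            {z : Fin (d + e) → ℝ | ∃ t, Fin.snoc z t ∈ T}} := by
        ext x
        simp only [Set.mem_setOf_eq]
        constructor
        · rintro ⟨y, hy⟩
          refine ⟨Fin.init y, y (Fin.last e), ?_⟩
          rw [← append_snoc, Fin.snoc_init_self]
          exact hy
        · rintro ⟨y, t, hyt⟩
          exact ⟨Fin.snoc y t, by rwa [append_snoc]⟩
      rw [this]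
      exact h2

section analytic
variable {n : ℕ} {S : Set (Fin n → ℝ)}

lemma trans_mem (hcone : RealTropCone S) {s : Fin n → ℝ} (hs : s ∈ S) (c : ℝ) :
    (fun i => c + s i) ∈ S := by
  have := hcone s hs s hs c c
  simpa using this

lemma max_mem (hcone : RealTropCone S) {s t : Fin n → ℝ} (hs : s ∈ S) (ht : t ∈ S) :
    (fun i => max (s i) (t i)) ∈ S := by
  have := hcone s hs t ht 0 0
  simpa using this

lemma sup'_mem (hcone : RealTropCone S) {ι : Type} (g : ι → Fin n → ℝ) :
    ∀ (t : Finset ι) (h : t.Nonempty), (∀ k ∈ t, g k ∈ S) →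
      (fun i => t.sup' h (fun k => g k i)) ∈ S := by
  intro t
  induction t using Finset.cons_induction with
  | empty => intro h; simp at h
  | cons a s ha ih =>
    intro h hg
    by_cases hs : s.Nonempty
    · have h1 := ih hs (fun k hk => hg k (Finset.mem_cons_of_mem hk))
      have h2 := hg a (Finset.mem_cons_self a s)
      have h3 := max_mem hcone h2 h1
      have : (fun i => (Finset.cons a s ha).sup' h (fun k => g k i))
          = fun i => max (g a i) (s.sup' hs (fun k => g k i)) := by
        funext i
        rw [Finset.sup'_cons hs]
      rw [this]
      exact h3
    · rw [Finset.not_nonempty_iff_eq_empty] at hs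
      subst hs
      have h2 := hg a (Finset.mem_cons_self a ∅)
      have : (fun i => (Finset.cons a ∅ ha).sup' h (fun k => g k i)) = g a := by
        funext i
        simp
      rw [this]
      exact h2
end analytic

lemma graph_semilinear {n : ℕ} (S : Set (Fin n → ℝ)) (hS : Semilinear S)
    (F : (Fin n → ℝ) → Fin n → ℝ)
    (hFS : ∀ x, F x ∈ S) (hFle : ∀ x, F x ≤ x)
    (hFub : ∀ x, ∀ y ∈ S, y ≤ x → y ≤ F x) :
    Semilinear (Set.range fun x => Fin.append x (F x)) := by
  classical
  set GA : Set (Fin (n+n) → ℝ) := {w | (fun k => w (Fin.natAdd n k)) ∈ S} with hGA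
  have hGAs : Semilinear GA := semilinear_comp (Fin.natAdd n) hS
  set GLe : Set (Fin (n+n) → ℝ) :=
    ⋂ k : Fin n, {w | w (Fin.natAdd n k) ≤ w (Fin.castAdd n k)} with hGLe
  have hGLes : Semilinear GLe := by
    refine semilinear_iInter _ (fun k => semilinear_le_coord _ _ ?_)
    intro hcontra
    have := congrArg Fin.val hcontra
    simp [Fin.natAdd, Fin.castAdd] at this
    omega
  set B : Set (Fin ((n+n)+n) → ℝ) :=
    ({v | (fun k => v (Fin.natAdd (n+n) k)) ∈ S} ∩
      ⋂ k : Fin n, {v | v (Fin.natAdd (n+n) k) ≤ v (Fin.castAdd n (Fin.castAdd n k))}) ∩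
      ⋃ k : Fin n, {v | v (Fin.castAdd n (Fin.natAdd n k)) < v (Fin.natAdd (n+n) k)}
    with hB
  have hBs : Semilinear B := by
    refine Semilinear.inter (Semilinear.inter (semilinear_comp _ hS) ?_) ?_
    · refine semilinear_iInter _ (fun k => semilinear_le_coord _ _ ?_)
      intro hcontra
      have := congrArg Fin.val hcontra
      simp [Fin.natAdd, Fin.castAdd] at this
      omega
    · refine semilinear_iUnion _ (fun k => semilinear_lt_coord _ _ ?_)
      intro hcontra
      have := congrArg Fin.val hcontra
      simp [Fin.natAdd, Fin.castAdd] at this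
      omega
  set PB : Set (Fin (n+n) → ℝ) := {w | ∃ y : Fin n → ℝ, Fin.append w y ∈ B} with hPB
  have hPBs : Semilinear PB := projAppend hBs
  have hEq : (Set.range fun x => Fin.append x (F x)) = (GA ∩ GLe) ∩ PBᶜ := by
    ext w
    constructor
    · rintro ⟨x, rfl⟩
      refine ⟨⟨?_, ?_⟩, ?_⟩
      · show (fun k => Fin.append x (F x) (Fin.natAdd n k)) ∈ S
        have : (fun k => Fin.append x (F x) (Fin.natAdd n k)) = F x := by
          funext k; rw [Fin.append_right]
        rw [this]; exact hFS x
      · refine Set.mem_iInter.2 (fun k => ?_)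
        show Fin.append x (F x) (Fin.natAdd n k) ≤ Fin.append x (F x) (Fin.castAdd n k)
        rw [Fin.append_right, Fin.append_left]
        exact hFle x k
      · rintro ⟨y, hy⟩
        simp only [hB, Set.mem_inter_iff, Set.mem_setOf_eq] at hy
        obtain ⟨⟨hyS, hyle⟩, hygt⟩ := hy
        have hyS' : y ∈ S := by
          have : (fun k => Fin.append (Fin.append x (F x)) y (Fin.natAdd (n+n) k)) = y := by
            funext k; rw [Fin.append_right]
          rwa [this] at hyS
        have hyx : y ≤ x := by
          intro k
          have := Set.mem_iInter.1 hyle k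
          simp only [Set.mem_setOf_eq] at this
          rwa [Fin.append_right, Fin.append_left, Fin.append_left] at this
        obtain ⟨k, hk⟩ := Set.mem_iUnion.1 hygt
        simp only [Set.mem_setOf_eq] at hk
        rw [Fin.append_right, Fin.append_left, Fin.append_right] at hk
        exact absurd hk (not_lt.2 (hFub x y hyS' hyx k))
    · rintro ⟨⟨hga, hgle⟩, hpb⟩
      set x : Fin n → ℝ := fun k => w (Fin.castAdd n k) with hx
      set z : Fin n → ℝ := fun k => w (Fin.natAdd n k) with hz
      have hzS : z ∈ S := hga
      have hzx : z ≤ x := by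
        intro k
        have := Set.mem_iInter.1 hgle k
        exact this
      have hFxz : F x ≤ z := by
        by_contra hcon
        rw [Pi.le_def] at hcon
        push_neg at hcon
        obtain ⟨k, hk⟩ := hcon
        refine hpb ⟨F x, ?_⟩
        rw [hB]
        refine ⟨⟨?_, ?_⟩, ?_⟩
        · show (fun k => Fin.append w (F x) (Fin.natAdd (n+n) k)) ∈ S
          have : (fun k => Fin.append w (F x) (Fin.natAdd (n+n) k)) = F x := by
            funext k; rw [Fin.append_right]
          rw [this]; exact hFS x
        · refine Set.mem_iInter.2 (fun k' => ?_)
          show Fin.append w (F x) (Fin.natAdd (n+n) k') ≤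
            Fin.append w (F x) (Fin.castAdd n (Fin.castAdd n k'))
          rw [Fin.append_right, Fin.append_left]
          exact hFle x k'
        · refine Set.mem_iUnion.2 ⟨k, ?_⟩
          show Fin.append w (F x) (Fin.castAdd n (Fin.natAdd n k)) <
            Fin.append w (F x) (Fin.natAdd (n+n) k)
          rw [Fin.append_right, Fin.append_left]
          exact hk
      have hzF : z = F x := le_antisymm (hFub x z hzS hzx) hFxz
      refine ⟨x, ?_⟩
      funext i
      refine Fin.addCases (fun j => ?_) (fun j => ?_) i
      · show Fin.append x (F x) (Fin.castAdd n j) = w (Fin.castAdd n j)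
        rw [Fin.append_left]
      · show Fin.append x (F x) (Fin.natAdd n j) = w (Fin.natAdd n j)
        rw [Fin.append_right, ← hzF]
  rw [hEq]
  exact (hGAs.inter hGLes).inter hPBs.compl

theorem stmt10 {n : ℕ} (S : Set (Fin n → ℝ)) (hne : S.Nonempty)
    (hclosed : IsClosed S) (hcone : RealTropCone S)
    (F : (Fin n → ℝ) → Fin n → ℝ)
    (hF : ∀ x k, F x k = sSup {t : ℝ | ∃ y ∈ S, y ≤ x ∧ y k = t}) :
    (∀ x, {y ∈ S | y ≤ x}.Nonempty) ∧
    (∀ x k, ∃ y ∈ S, y ≤ x ∧ y k = F x k) ∧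
    (∀ x, F x ∈ S) ∧
    Monotone F ∧ AddHomog F ∧
    S = {x | x ≤ F x} ∧
    (Semilinear S → SemilinearFun F) := by
  set A : (Fin n → ℝ) → Fin n → Set ℝ :=
    fun x k => {t : ℝ | ∃ y ∈ S, y ≤ x ∧ y k = t} with hA
  have hbdd : ∀ x k, BddAbove (A x k) := by
    intro x k
    exact ⟨x k, by rintro t ⟨y, hy, hyx, rfl⟩; exact hyx k⟩
  have hCne : ∀ x, {y ∈ S | y ≤ x}.Nonempty := by
    intro x
    obtain ⟨s, hs⟩ := hne
    set c : ℝ := ∑ i, |s i - x i| with hc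
    refine ⟨fun i => (-c) + s i, trans_mem hcone hs (-c), fun i => ?_⟩
    have h1 : |s i - x i| ≤ c := by
      rw [hc]
      exact Finset.single_le_sum (f := fun j => |s j - x j|) (fun j _ => abs_nonneg _) (Finset.mem_univ i)
    have h2 : s i - x i ≤ |s i - x i| := le_abs_self _
    simp only
    linarith
  have hAne : ∀ x k, (A x k).Nonempty := by
    intro x k
    obtain ⟨y, hy, hyx⟩ := hCne x
    exact ⟨y k, y, hy, hyx, rfl⟩
  have hFub : ∀ x, ∀ y ∈ S, y ≤ x → y ≤ F x := by
    intro x y hy hyx k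
    rw [hF]
    exact le_csSup (hbdd x k) ⟨y, hy, hyx, rfl⟩
  have hFle : ∀ x, F x ≤ x := by
    intro x k
    rw [hF]
    exact csSup_le (hAne x k) (by rintro t ⟨y, hy, hyx, rfl⟩; exact hyx k)
  have hFS : ∀ x, F x ∈ S := by
    intro x
    rcases Nat.eq_zero_or_pos n with hn | hn
    · subst hn
      obtain ⟨s, hs⟩ := hne
      have : F x = s := Subsingleton.elim _ _
      rw [this]; exact hs
    · have hnon : Nonempty (Fin n) := ⟨⟨0, hn⟩⟩
      have hcl : F x ∈ closure S := by
        rw [Metric.mem_closure_iff]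
        intro ε hε
        have hyk : ∀ k : Fin n, ∃ y, y ∈ S ∧ y ≤ x ∧ F x k - ε/2 < y k := by
          intro k
          have h1 : F x k - ε/2 < sSup (A x k) := by
            rw [← hF]; linarith
          obtain ⟨t, ⟨y, hy, hyx, rfl⟩, hlt⟩ := exists_lt_of_lt_csSup (hAne x k) h1
          exact ⟨y, hy, hyx, hlt⟩
        choose y hyS hyx hyk using hyk
        set z : Fin n → ℝ := fun i => Finset.univ.sup' Finset.univ_nonempty (fun k => y k i)
          with hz
        have hzS : z ∈ S := sup'_mem hcone y _ _ (fun k _ => hyS k)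
        refine ⟨z, hzS, ?_⟩
        rw [dist_pi_lt_iff hε]
        intro i
        rw [Real.dist_eq, abs_lt]
        have hub : z i ≤ F x i := by
          rw [hz]
          exact Finset.sup'_le _ _ (fun k _ => hFub x (y k) (hyS k) (hyx k) i)
        have hlb : F x i - ε/2 < z i := by
          have := Finset.le_sup' (fun k => y k i) (Finset.mem_univ i)
          have h2 := hyk i
          rw [hz]
          simp only
          linarith
        constructor <;> linarith
      rwa [hclosed.closure_eq] at hcl
  refine ⟨hCne, fun x k => ⟨F x, hFS x, hFle x, rfl⟩, hFS, ?_, ?_, ?_, ?_⟩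
  · intro x x' hxx'
    exact hFub x' (F x) (hFS x) (le_trans (hFle x) hxx')
  · intro c x
    funext k
    have hg : IsGreatest (A (fun i => c + x i) k) (c + F x k) := by
      constructor
      · exact ⟨fun i => c + F x i, trans_mem hcone (hFS x) c,
          fun i => by simp only; linarith [hFle x i], rfl⟩
      · rintro t ⟨y', hy', hy'x, rfl⟩
        have h1 : (fun i => (-c) + y' i) ∈ S := trans_mem hcone hy' (-c)
        have h2 : (fun i => (-c) + y' i) ≤ x := fun i => by
          simp only; have := hy'x i; simp only at this; linarith
        have h3 := hFub x _ h1 h2 k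
        simp only at h3
        linarith
    rw [hF]
    exact hg.csSup_eq
  · ext x
    simp only [Set.mem_setOf_eq]
    constructor
    · intro hx
      exact hFub x x hx le_rfl
    · intro hx
      have : x = F x := le_antisymm hx (hFle x)
      rw [this]
      exact hFS x
  · intro hS
    exact graph_semilinear S hS F hFS hFle (fun x y hy hyx => hFub x y hy hyx)
end

section
/- Let n ≥ 1 and, for each v ∈ [n], let E_v be a nonempty finite set. For every e ∈ E_v let r_e ∈ ℝ, and let (a_{e,j}, u_{e,j})_{j ∈ J_e} and (b_{e,l}, w_{e,l})_{l ∈ L_e} be two nonempty finite families with a_{e,j}, b_{e,l} ∈ ℝ and u_{e,j}, w_{e,l} ∈ [n]. Define F : 𝕋ⁿ → 𝕋ⁿ by F_v(x) = min_{e ∈ E_v} ( r_e + ½·( max_{j ∈ J_e} (a_{e,j} + x_{u_{e,j}}) + max_{l ∈ L_e} (b_{e,l} + x_{w_{e,l}}) ) ), where r + ½·z for z ∈ 𝕋 is interpreted as r + z/2 for z ∈ ℝ and as −∞ for z = −∞. Then the set {x ∈ 𝕋ⁿ : x_v ≤ F_v(x) for all v ∈ [n]} is a tropical Metzler spectrahedral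 cone, i.e., there exist m ≥ 1 and symmetric tropical Metzler matrices Q⁽¹⁾, …, Q⁽ⁿ⁾ of size m such that this set equals S(−∞|Q⁽¹⁾,…,Q⁽ⁿ⁾). -/
open Finset

section Stmt11Aux

lemma trop_sup_add_distrib {α : Type*} (s : Finset α) (f : α → Trop) (t : Trop) :
    s.sup f + t = s.sup (fun j => f j + t) := by
  induction s using Finset.cons_induction with
  | empty => simp
  | cons a s ha ih =>
      rw [Finset.sup_cons, Finset.sup_cons, ← ih]
      have h : Monotone (fun z : Trop => z + t) := fun _ _ h => add_le_add_left h t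
      exact h.map_sup _ _

lemma sup_ite_point {n : ℕ} (v : Fin n) (c : Trop) (x : Fin n → Trop) :
    Finset.univ.sup (fun k : Fin n => if v = k then c + x k else (⊥:Trop)) = c + x v := by
  apply le_antisymm
  · refine Finset.sup_le fun k _ => ?_
    split
    · next h => subst h; exact le_rfl
    · exact bot_le
  · refine le_trans ?_ (Finset.le_sup (Finset.mem_univ v))
    rw [if_pos rfl]

lemma tropAff_botfun {n : ℕ} (x : Fin n → Trop) : tropAff ⊥ (fun _ => ⊥) x = ⊥ := by
  simp [tropAff]

lemma tropAff_indexed {n N : ℕ} (hN : 0 < N) (c : Fin N → ℝ) (g : Fin N → Fin n)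
    (x : Fin n → Trop) :
    tropAff ⊥ (fun k => Finset.univ.sup fun j => if g j = k then ((c j : ℝ) : Trop) else ⊥) x
      = Finset.univ.sup' ⟨⟨0, hN⟩, Finset.mem_univ _⟩ (fun j => ((c j : ℝ) : Trop) + x (g j)) := by
  erw [Finset.sup'_eq_sup]
  unfold tropAff
  rw [bot_sup_eq]
  have h1 : ∀ k, (Finset.univ.sup fun j => if g j = k then ((c j : ℝ) : Trop) else ⊥) + x k
      = Finset.univ.sup fun j => if g j = k then ((c j : ℝ) : Trop) + x k else ⊥ := by
    intro k
    rw [trop_sup_add_distrib]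
    congr 1; funext j
    split <;> simp
  simp_rw [h1]
  rw [Finset.sup_comm]
  congr 1; funext j
  exact sup_ite_point (g j) ((c j : ℝ) : Trop) x

lemma tropAff_point {n : ℕ} (v : Fin n) (c : ℝ) (x : Fin n → Trop) :
    tropAff ⊥ (fun k => if v = k then ((c : ℝ) : Trop) else ⊥) x = ((c : ℝ) : Trop) + x v := by
  unfold tropAff
  rw [bot_sup_eq]
  have h1 : ∀ k, (if v = k then ((c : ℝ) : Trop) else ⊥) + x k
      = if v = k then ((c : ℝ) : Trop) + x k else ⊥ := by
    intro k; split <;> simp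
  simp_rw [h1]
  exact sup_ite_point v _ x

lemma key_equiv (r : ℝ) (xv C : Trop) :
    xv ≤ WithBot.map (fun t => r + t / 2) C ↔
      (((-r : ℝ) : Trop) + xv) + (((-r : ℝ) : Trop) + xv) ≤ C := by
  induction xv using WithBot.recBotCoe with
  | bot => simp
  | coe s =>
    induction C using WithBot.recBotCoe with
    | bot => simp
    | coe t =>
      rw [WithBot.map_coe, WithBot.coe_le_coe, ← WithBot.coe_add, ← WithBot.coe_add,
        WithBot.coe_le_coe]
      constructor <;> intro h <;> linarith

def offAux {n : ℕ} {E : Fin n → ℕ} (r : ∀ v : Fin n, Fin (E v) → ℝ) (k : Fin n) :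
    ((Σ v : Fin n, Fin (E v)) ⊕ (Σ v : Fin n, Fin (E v))) →
    ((Σ v : Fin n, Fin (E v)) ⊕ (Σ v : Fin n, Fin (E v))) → Trop
  | Sum.inl s, Sum.inr s' => if s = s' ∧ s.1 = k then ((-(r s.1 s.2) : ℝ) : Trop) else ⊥
  | Sum.inr s', Sum.inl s => if s = s' ∧ s.1 = k then ((-(r s.1 s.2) : ℝ) : Trop) else ⊥
  | _, _ => ⊥

lemma offAux_symm {n : ℕ} {E : Fin n → ℕ} (r : ∀ v : Fin n, Fin (E v) → ℝ) (k : Fin n)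
    (p q : (Σ v : Fin n, Fin (E v)) ⊕ (Σ v : Fin n, Fin (E v))) :
    offAux r k p q = offAux r k q p := by
  rcases p with s | s <;> rcases q with s' | s' <;> rfl

lemma offAux_diag {n : ℕ} {E : Fin n → ℕ} (r : ∀ v : Fin n, Fin (E v) → ℝ) (k : Fin n)
    (p : (Σ v : Fin n, Fin (E v)) ⊕ (Σ v : Fin n, Fin (E v))) :
    offAux r k p p = ⊥ := by
  rcases p with s | s <;> rfl

def dpAux {n : ℕ} {E : Fin n → ℕ} {J L : ∀ v : Fin n, Fin (E v) → ℕ}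
    (a : ∀ (v : Fin n) (e : Fin (E v)), Fin (J v e) → ℝ)
    (u : ∀ (v : Fin n) (e : Fin (E v)), Fin (J v e) → Fin n)
    (b : ∀ (v : Fin n) (e : Fin (E v)), Fin (L v e) → ℝ)
    (w : ∀ (v : Fin n) (e : Fin (E v)), Fin (L v e) → Fin n)
    (k : Fin n) :
    ((Σ v : Fin n, Fin (E v)) ⊕ (Σ v : Fin n, Fin (E v))) → Trop
  | Sum.inl s => Finset.univ.sup fun j => if u s.1 s.2 j = k then ((a s.1 s.2 j : ℝ) : Trop) else ⊥
  | Sum.inr s => Finset.univ.sup fun l => if w s.1 s.2 l = k then ((b s.1 s.2 l : ℝ) : Trop) else ⊥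

noncomputable def auxQ {n m : ℕ} {E : Fin n → ℕ} {J L : ∀ v : Fin n, Fin (E v) → ℕ}
    (r : ∀ v : Fin n, Fin (E v) → ℝ)
    (a : ∀ (v : Fin n) (e : Fin (E v)), Fin (J v e) → ℝ)
    (u : ∀ (v : Fin n) (e : Fin (E v)), Fin (J v e) → Fin n)
    (b : ∀ (v : Fin n) (e : Fin (E v)), Fin (L v e) → ℝ)
    (w : ∀ (v : Fin n) (e : Fin (E v)), Fin (L v e) → Fin n)
    (φ : Fin m ≃ ((Σ v : Fin n, Fin (E v)) ⊕ (Σ v : Fin n, Fin (E v))))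
    (k : Fin n) : MetzlerData m where
  Dp := fun i => dpAux a u b w k (φ i)
  Dm := fun _ => ⊥
  offdiag := fun i i' => offAux r k (φ i) (φ i')
  diag_sign := fun _ => Or.inr rfl
  offdiag_symm := fun i i' => offAux_symm r k (φ i) (φ i')
  offdiag_diag := fun i => offAux_diag r k (φ i)

@[simp] lemma auxQ_Dp {n m : ℕ} {E : Fin n → ℕ} {J L : ∀ v : Fin n, Fin (E v) → ℕ}
    (r : ∀ v : Fin n, Fin (E v) → ℝ)
    (a : ∀ (v : Fin n) (e : Fin (E v)), Fin (J v e) → ℝ)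
    (u : ∀ (v : Fin n) (e : Fin (E v)), Fin (J v e) → Fin n)
    (b : ∀ (v : Fin n) (e : Fin (E v)), Fin (L v e) → ℝ)
    (w : ∀ (v : Fin n) (e : Fin (E v)), Fin (L v e) → Fin n)
    (φ : Fin m ≃ ((Σ v : Fin n, Fin (E v)) ⊕ (Σ v : Fin n, Fin (E v))))
    (k : Fin n) (i : Fin m) :
    (auxQ r a u b w φ k).Dp i = dpAux a u b w k (φ i) := rfl

@[simp] lemma auxQ_Dm {n m : ℕ} {E : Fin n → ℕ} {J L : ∀ v : Fin n, Fin (E v) → ℕ}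
    (r : ∀ v : Fin n, Fin (E v) → ℝ)
    (a : ∀ (v : Fin n) (e : Fin (E v)), Fin (J v e) → ℝ)
    (u : ∀ (v : Fin n) (e : Fin (E v)), Fin (J v e) → Fin n)
    (b : ∀ (v : Fin n) (e : Fin (E v)), Fin (L v e) → ℝ)
    (w : ∀ (v : Fin n) (e : Fin (E v)), Fin (L v e) → Fin n)
    (φ : Fin m ≃ ((Σ v : Fin n, Fin (E v)) ⊕ (Σ v : Fin n, Fin (E v))))
    (k : Fin n) (i : Fin m) :
    (auxQ r a u b w φ k).Dm i = ⊥ := rfl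

@[simp] lemma auxQ_offdiag {n m : ℕ} {E : Fin n → ℕ} {J L : ∀ v : Fin n, Fin (E v) → ℕ}
    (r : ∀ v : Fin n, Fin (E v) → ℝ)
    (a : ∀ (v : Fin n) (e : Fin (E v)), Fin (J v e) → ℝ)
    (u : ∀ (v : Fin n) (e : Fin (E v)), Fin (J v e) → Fin n)
    (b : ∀ (v : Fin n) (e : Fin (E v)), Fin (L v e) → ℝ)
    (w : ∀ (v : Fin n) (e : Fin (E v)), Fin (L v e) → Fin n)
    (φ : Fin m ≃ ((Σ v : Fin n, Fin (E v)) ⊕ (Σ v : Fin n, Fin (E v))))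
    (k : Fin n) (i i' : Fin m) :
    (auxQ r a u b w φ k).offdiag i i' = offAux r k (φ i) (φ i') := rfl

end Stmt11Aux

theorem stmt11 {n : ℕ} (hn : 1 ≤ n)
    (E : Fin n → ℕ) (hE : ∀ v, 0 < E v)
    (r : ∀ v : Fin n, Fin (E v) → ℝ)
    (J : ∀ v : Fin n, Fin (E v) → ℕ) (hJ : ∀ v e, 0 < J v e)
    (L : ∀ v : Fin n, Fin (E v) → ℕ) (hL : ∀ v e, 0 < L v e)
    (a : ∀ (v : Fin n) (e : Fin (E v)), Fin (J v e) → ℝ)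
    (u : ∀ (v : Fin n) (e : Fin (E v)), Fin (J v e) → Fin n)
    (b : ∀ (v : Fin n) (e : Fin (E v)), Fin (L v e) → ℝ)
    (w : ∀ (v : Fin n) (e : Fin (E v)), Fin (L v e) → Fin n)
    (F : (Fin n → Trop) → Fin n → Trop)
    (hF : ∀ x v, F x v =
      Finset.univ.inf' ⟨⟨0, hE v⟩, Finset.mem_univ _⟩ (fun e =>
        WithBot.map (fun t => r v e + t / 2)
          ((Finset.univ.sup' ⟨⟨0, hJ v e⟩, Finset.mem_univ _⟩
              fun j => ((a v e j : ℝ) : Trop) + x (u v e j))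
            + (Finset.univ.sup' ⟨⟨0, hL v e⟩, Finset.mem_univ _⟩
              fun l => ((b v e l : ℝ) : Trop) + x (w v e l))))) :
    ∃ m : ℕ, 1 ≤ m ∧ ∃ Q : Fin n → MetzlerData m,
      {x : Fin n → Trop | ∀ v, x v ≤ F x v} =
        metzlerSpectrahedron (botMetzler m) Q := by
  classical
  haveI hne : Nonempty (Σ v : Fin n, Fin (E v)) := ⟨⟨⟨0, hn⟩, ⟨0, hE _⟩⟩⟩
  refine ⟨Fintype.card ((Σ v : Fin n, Fin (E v)) ⊕ (Σ v : Fin n, Fin (E v))),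
    Fintype.card_pos, ?_⟩
  set φ := (Fintype.equivFin ((Σ v : Fin n, Fin (E v)) ⊕ (Σ v : Fin n, Fin (E v)))).symm with hφ
  refine ⟨fun k => auxQ r a u b w φ k, ?_⟩
  ext x
  simp only [Set.mem_setOf_eq, metzlerSpectrahedron, botMetzler, auxQ_Dp, auxQ_Dm, auxQ_offdiag]
  have hDpA : ∀ s : Σ v : Fin n, Fin (E v),
      tropAff ⊥ (fun k => dpAux a u b w k (Sum.inl s)) x
        = Finset.univ.sup' ⟨⟨0, hJ s.1 s.2⟩, Finset.mem_univ _⟩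
            (fun j => ((a s.1 s.2 j : ℝ) : Trop) + x (u s.1 s.2 j)) :=
    fun s => tropAff_indexed (hJ s.1 s.2) _ _ x
  have hDpB : ∀ s : Σ v : Fin n, Fin (E v),
      tropAff ⊥ (fun k => dpAux a u b w k (Sum.inr s)) x
        = Finset.univ.sup' ⟨⟨0, hL s.1 s.2⟩, Finset.mem_univ _⟩
            (fun l => ((b s.1 s.2 l : ℝ) : Trop) + x (w s.1 s.2 l)) :=
    fun s => tropAff_indexed (hL s.1 s.2) _ _ x
  have hoff : ∀ s : Σ v : Fin n, Fin (E v),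
      tropAff ⊥ (fun k => offAux r k (Sum.inl s) (Sum.inr s)) x
        = ((-(r s.1 s.2) : ℝ) : Trop) + x s.1 := by
    intro s
    have h1 : (fun k => offAux r k (Sum.inl s) (Sum.inr s))
        = fun k => if s.1 = k then ((-(r s.1 s.2) : ℝ) : Trop) else ⊥ := by
      funext k; simp [offAux]
    rw [h1, tropAff_point]
  have hcrux : ∀ s : Σ v : Fin n, Fin (E v),
      (x s.1 ≤ WithBot.map (fun t => r s.1 s.2 + t / 2)
        ((Finset.univ.sup' ⟨⟨0, hJ s.1 s.2⟩, Finset.mem_univ _⟩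
            fun j => ((a s.1 s.2 j : ℝ) : Trop) + x (u s.1 s.2 j))
          + (Finset.univ.sup' ⟨⟨0, hL s.1 s.2⟩, Finset.mem_univ _⟩
            fun l => ((b s.1 s.2 l : ℝ) : Trop) + x (w s.1 s.2 l)))) ↔
      tropAff ⊥ (fun k => offAux r k (Sum.inl s) (Sum.inr s)) x
        + tropAff ⊥ (fun k => offAux r k (Sum.inl s) (Sum.inr s)) x
      ≤ tropAff ⊥ (fun k => dpAux a u b w k (Sum.inl s)) x
        + tropAff ⊥ (fun k => dpAux a u b w k (Sum.inr s)) x := by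
    intro s
    rw [hoff s, hDpA s, hDpB s]
    exact key_equiv (r s.1 s.2) (x s.1) _
  have hFle : ∀ v, (x v ≤ F x v ↔ ∀ e : Fin (E v),
      x v ≤ WithBot.map (fun t => r v e + t / 2)
        ((Finset.univ.sup' ⟨⟨0, hJ v e⟩, Finset.mem_univ _⟩
            fun j => ((a v e j : ℝ) : Trop) + x (u v e j))
          + (Finset.univ.sup' ⟨⟨0, hL v e⟩, Finset.mem_univ _⟩
            fun l => ((b v e l : ℝ) : Trop) + x (w v e l)))) := by
    intro v
    rw [hF]
    erw [Finset.le_inf'_iff]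
    exact ⟨fun h e => h e (Finset.mem_univ e), fun h e _ => h e⟩
  constructor
  · intro hx
    refine ⟨fun i => by rw [tropAff_botfun]; exact bot_le, fun i j hij => ?_⟩
    rcases hp : φ i with s | s <;> rcases hq : φ j with s' | s'
    · have h1 : (fun k => offAux r k (Sum.inl s) (Sum.inl s')) = fun _ => (⊥ : Trop) := rfl
      rw [h1, tropAff_botfun]
      simp
    · by_cases h : s = s'
      · subst h
        exact (hcrux s).mp ((hFle s.1).mp (hx s.1) s.2)
      · have h1 : (fun k => offAux r k (Sum.inl s) (Sum.inr s')) = fun _ => (⊥ : Trop) := by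
          funext k; simp [offAux, h]
        rw [h1, tropAff_botfun]
        simp
    · by_cases h : s' = s
      · subst h
        have hsym : (fun k => offAux r k (Sum.inr s') (Sum.inl s'))
            = fun k => offAux r k (Sum.inl s') (Sum.inr s') := by
          funext k; exact offAux_symm r k _ _
        rw [hsym, add_comm (tropAff ⊥ (fun k => dpAux a u b w k (Sum.inr s')) x)]
        exact (hcrux s').mp ((hFle s'.1).mp (hx s'.1) s'.2)
      · have h1 : (fun k => offAux r k (Sum.inr s) (Sum.inl s')) = fun _ => (⊥ : Trop) := by
          funext k; simp [offAux, h]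
        rw [h1, tropAff_botfun]
        simp
    · have h1 : (fun k => offAux r k (Sum.inr s) (Sum.inr s')) = fun _ => (⊥ : Trop) := rfl
      rw [h1, tropAff_botfun]
      simp
  · rintro ⟨-, h2⟩ v
    refine (hFle v).mpr fun e => ?_
    have hij : φ.symm (Sum.inl (⟨v, e⟩ : Σ v : Fin n, Fin (E v)))
        ≠ φ.symm (Sum.inr (⟨v, e⟩ : Σ v : Fin n, Fin (E v))) := by
      intro hcon
      exact absurd (φ.symm.injective hcon) (by simp)
    have h3 := h2 _ _ hij
    rw [φ.apply_symm_apply, φ.apply_symm_apply] at h3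
    exact (hcrux ⟨v, e⟩).mpr h3
end
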